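/- arXiv:2103.05089 — 4 statements merged into one kernel-verified Lean document; each statement's English description precedes it below -/
import Mathlib

section
/- Let μ be a positive Borel measure on [0,∞) and define K(t) = ∫₀^∞ e^{−tx} μ(dx) for t > 0. Assume K(t) < ∞ for all t > 0, K is integrable on (0,1), and K(t) decreases to 0 as t → ∞. Then μ([0,1]) < ∞, ∫₁^∞ x⁻¹ μ(dx) < ∞, μ({0}) = 0, and for every ω ≠ 0 the improper integrals converge with lim_{A→∞} ∫₀^A K(t)cos(ωt) dt = ∫₀^∞ x/(x² + ω²) μ(dx) and lim_{A→∞} ∫₀^A K(t)sin(ωt) dt = ∫₀^∞ ω/(x² + ω²) μ(dx), both right-hand sides being finite. -/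
open MeasureTheory Filter Set

namespace CMKernelAux

lemma cm_re (x ω t : ℝ) : ((-(x:ℂ) + ω*Complex.I) * t).re = -(t*x) := by simp; ring

lemma cm_norm (x ω t : ℝ) :
    ‖Complex.exp ((-(x:ℂ) + ω*Complex.I) * t)‖ = Real.exp (-(t*x)) := by
  rw [Complex.norm_exp, cm_re]

lemma cm_ne (x ω : ℝ) (hω : ω ≠ 0) : (-(x:ℂ) + ω*Complex.I) ≠ 0 := by
  intro h; have := congrArg Complex.im h; simp at this; exact hω this

lemma cm_abs (x ω : ℝ) : ‖(-(x:ℂ) + ω*Complex.I)‖ = Real.sqrt (x^2 + ω^2) := by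
  rw [Complex.norm_def]; congr 1; simp [Complex.normSq_apply]; ring

lemma cm_abs' (x ω : ℝ) : ‖((x:ℂ) + ω*Complex.I)‖ = Real.sqrt (x^2 + ω^2) := by
  have := cm_abs (-x) ω
  simpa using this

lemma cm_exp (x ω t : ℝ) :
    Complex.exp ((-(x:ℂ) + ω*Complex.I) * t)
      = Complex.exp ((ω*t : ℝ) * Complex.I) * (Real.exp (-(t*x)) : ℝ) := by
  rw [Complex.ofReal_exp, ← Complex.exp_add]
  congr 1
  push_cast
  ring

lemma cm_Kexp_re (Kt ω t : ℝ) :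
    ((Kt:ℂ) * Complex.exp ((ω*t : ℝ) * Complex.I)).re = Kt * Real.cos (ω*t) := by
  simp [Complex.mul_re, Complex.exp_re, Complex.exp_im]

lemma cm_Kexp_im (Kt ω t : ℝ) :
    ((Kt:ℂ) * Complex.exp ((ω*t : ℝ) * Complex.I)).im = Kt * Real.sin (ω*t) := by
  simp [Complex.mul_im, Complex.exp_re, Complex.exp_im]

lemma cm_closed (x ω A : ℝ) (hω : ω ≠ 0) :
    ∫ t in (0:ℝ)..A, Complex.exp ((-(x:ℂ) + ω*Complex.I) * t)
      = (Complex.exp ((-(x:ℂ) + ω*Complex.I) * A) - 1) / (-(x:ℂ) + ω*Complex.I) := by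
  rw [integral_exp_mul_complex (cm_ne x ω hω)]
  norm_num

lemma cm_L_eq (x ω : ℝ) (hω : ω ≠ 0) :
    (0 - 1) / (-(x:ℂ) + ω*Complex.I) = ((x:ℂ) + ω*Complex.I) / ((x^2 + ω^2 : ℝ):ℂ) := by
  have hs : (0:ℝ) < x^2 + ω^2 := by positivity
  have hs' : ((x^2 + ω^2 : ℝ):ℂ) ≠ 0 := by
    exact_mod_cast Complex.ofReal_ne_zero.mpr hs.ne'
  rw [div_eq_div_iff (cm_ne x ω hω) hs']
  push_cast
  ring_nf
  rw [Complex.I_sq]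
  ring

lemma cm_L_re (x ω : ℝ) :
    (((x:ℂ) + ω*Complex.I) / ((x^2 + ω^2 : ℝ):ℂ)).re = x / (x^2 + ω^2) := by
  rw [Complex.div_ofReal_re]; simp

lemma cm_L_im (x ω : ℝ) :
    (((x:ℂ) + ω*Complex.I) / ((x^2 + ω^2 : ℝ):ℂ)).im = ω / (x^2 + ω^2) := by
  rw [Complex.div_ofReal_im]; simp

lemma cm_exp_tendsto (x ω : ℝ) (hx : 0 < x) :
    Tendsto (fun A : ℝ => Complex.exp ((-(x:ℂ) + ω*Complex.I) * A)) atTop (nhds 0) := by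
  rw [tendsto_zero_iff_norm_tendsto_zero]
  simp only [cm_norm]
  have h1 : Tendsto (fun A : ℝ => A * x) atTop atTop :=
    Tendsto.atTop_mul_const hx tendsto_id
  exact (Real.tendsto_exp_neg_atTop_nhds_zero).comp h1

lemma cm_tendsto (x ω : ℝ) (hx : 0 < x) (hω : ω ≠ 0) :
    Tendsto (fun A : ℝ => (Complex.exp ((-(x:ℂ) + ω*Complex.I) * A) - 1) / (-(x:ℂ) + ω*Complex.I))
      atTop (nhds (((x:ℂ) + ω*Complex.I) / ((x^2 + ω^2 : ℝ):ℂ))) := by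
  rw [← cm_L_eq x ω hω]
  exact ((cm_exp_tendsto x ω hx).sub tendsto_const_nhds).div_const _

lemma cm_G_bound (x ω A : ℝ) (hx : 0 ≤ x) (hA : 0 ≤ A) (hω : ω ≠ 0) :
    ‖(Complex.exp ((-(x:ℂ) + ω*Complex.I) * A) - 1) / (-(x:ℂ) + ω*Complex.I)‖
      ≤ 2 / Real.sqrt (x^2 + ω^2) := by
  have hs : 0 < Real.sqrt (x^2 + ω^2) := Real.sqrt_pos.mpr (by positivity)
  rw [norm_div, cm_abs]
  gcongr
  calc ‖Complex.exp ((-(x:ℂ) + ω*Complex.I) * A) - 1‖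
      ≤ ‖Complex.exp ((-(x:ℂ) + ω*Complex.I) * A)‖ + ‖(1:ℂ)‖ := norm_sub_le _ _
    _ ≤ 1 + 1 := by
        rw [cm_norm]
        gcongr
        · exact Real.exp_le_one_iff.mpr (by nlinarith)
        · simp
    _ = 2 := by norm_num

lemma cm_L_bound (x ω : ℝ) (hω : ω ≠ 0) :
    ‖((x:ℂ) + ω*Complex.I) / ((x^2 + ω^2 : ℝ):ℂ)‖ ≤ 2 / Real.sqrt (x^2 + ω^2) := by
  have hs : (0:ℝ) < x^2 + ω^2 := by positivity
  have hss : 0 < Real.sqrt (x^2 + ω^2) := Real.sqrt_pos.mpr hs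
  rw [norm_div, cm_abs']
  rw [Complex.norm_real, Real.norm_eq_abs, abs_of_pos hs, div_le_div_iff₀ hs hss]
  rw [Real.mul_self_sqrt hs.le]
  nlinarith

end CMKernelAux

open CMKernelAux

/-- Fourier cosine and sine transforms of a completely monotonic kernel
`K(t) = ∫₀^∞ e^{−tx} μ(dx)`: `μ([0,1]) < ∞`, `∫₁^∞ x⁻¹ μ(dx) < ∞`,
`μ({0}) = 0`, and for every `ω ≠ 0`,
`𝒦cos(ω) = ∫₀^∞ x/(x²+ω²) μ(dx)` and `𝒦sin(ω) = ∫₀^∞ ω/(x²+ω²) μ(dx)`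
as convergent improper integrals. -/
theorem completely_monotonic_kernel_fourier_transforms
    (μ : Measure ℝ) (K : ℝ → ℝ)
    (hKfin : ∀ t > 0, IntegrableOn (fun x => Real.exp (-(t * x))) (Ici 0) μ)
    (hK : ∀ t > 0, K t = ∫ x in Ici (0:ℝ), Real.exp (-(t * x)) ∂μ)
    (hKint : IntegrableOn K (Ioo 0 1))
    (hKanti : AntitoneOn K (Ioi 0))
    (hK0 : Tendsto K atTop (nhds 0)) :
    μ (Icc (0:ℝ) 1) < ⊤ ∧
    IntegrableOn (fun x : ℝ => x⁻¹) (Ici 1) μ ∧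
    μ {0} = 0 ∧
    ∀ ω : ℝ, ω ≠ 0 →
      IntegrableOn (fun x => x / (x ^ 2 + ω ^ 2)) (Ici 0) μ ∧
      IntegrableOn (fun x => ω / (x ^ 2 + ω ^ 2)) (Ici 0) μ ∧
      Tendsto (fun A => ∫ t in (0:ℝ)..A, K t * Real.cos (ω * t)) atTop
        (nhds (∫ x in Ici (0:ℝ), x / (x ^ 2 + ω ^ 2) ∂μ)) ∧
      Tendsto (fun A => ∫ t in (0:ℝ)..A, K t * Real.sin (ω * t)) atTop
        (nhds (∫ x in Ici (0:ℝ), ω / (x ^ 2 + ω ^ 2) ∂μ)) := by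
  -- ## Step 1 : finiteness of μ on compact subsets of [0, ∞)
  have hfin : ∀ b : ℝ, μ (Icc 0 b) < ⊤ := by
    intro b
    have hmeas : Measurable fun x : ℝ => ENNReal.ofReal (Real.exp (-(1*x))) := by
      fun_prop
    have hfi : (∫⁻ x in Ici (0:ℝ), ENNReal.ofReal (Real.exp (-(1*x))) ∂μ) < ⊤ := by
      have h2 := (hKfin 1 one_pos).2
      rw [hasFiniteIntegral_iff_ofReal (ae_of_all _ fun x => Real.exp_nonneg _)] at h2
      exact h2
    have hb : ENNReal.ofReal (Real.exp (-(1*b))) * μ (Icc 0 b)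
        ≤ ∫⁻ x in Ici (0:ℝ), ENNReal.ofReal (Real.exp (-(1*x))) ∂μ := by
      calc ENNReal.ofReal (Real.exp (-(1*b))) * μ (Icc 0 b)
          = ∫⁻ _ in Icc (0:ℝ) b, ENNReal.ofReal (Real.exp (-(1*b))) ∂μ :=
            (setLIntegral_const _ _).symm
        _ ≤ ∫⁻ x in Icc (0:ℝ) b, ENNReal.ofReal (Real.exp (-(1*x))) ∂μ := by
            apply setLIntegral_mono hmeas
            intro x hx
            exact ENNReal.ofReal_le_ofReal (Real.exp_le_exp.mpr (by nlinarith [hx.2]))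
        _ ≤ ∫⁻ x in Ici (0:ℝ), ENNReal.ofReal (Real.exp (-(1*x))) ∂μ :=
            lintegral_mono_set Icc_subset_Ici_self
    by_contra h
    push_neg at h
    have htop : μ (Icc 0 b) = ⊤ := top_le_iff.mp h
    rw [htop, ENNReal.mul_top (ENNReal.ofReal_pos.mpr (Real.exp_pos _)).ne'] at hb
    exact (lt_irrefl _ (lt_of_le_of_lt hb hfi))
  -- ## Step 2 : σ-finiteness of the restricted measure
  haveI hsf : SigmaFinite (μ.restrict (Ici (0:ℝ))) := by
    refine ⟨⟨⟨fun n => Icc 0 n ∪ Iio 0, fun _ => trivial, fun n => ?_, ?_⟩⟩⟩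
    · rw [Measure.restrict_apply (measurableSet_Icc.union measurableSet_Iio)]
      refine lt_of_le_of_lt (measure_mono ?_) (hfin n)
      rintro x ⟨hx1 | hx1, hx2⟩
      · exact hx1
      · exact absurd (mem_Ici.mp hx2) (not_le.mpr hx1)
    · ext x
      simp only [mem_iUnion, mem_union, mem_Icc, mem_Iio, mem_univ, iff_true]
      rcases lt_or_ge x 0 with hx | hx
      · exact ⟨0, Or.inr hx⟩
      · exact ⟨⌈x⌉₊, Or.inl ⟨hx, Nat.le_ceil x⟩⟩
  -- K is nonnegative on (0,∞)
  have hKnn : ∀ t : ℝ, 0 < t → 0 ≤ K t := by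
    intro t ht
    rw [hK t ht]
    exact integral_nonneg fun x => Real.exp_nonneg _
  -- lintegral expression of K
  have hKofReal : ∀ t : ℝ, 0 < t →
      (∫⁻ x in Ici (0:ℝ), ENNReal.ofReal (Real.exp (-(t*x))) ∂μ) = ENNReal.ofReal (K t) := by
    intro t ht
    rw [hK t ht,
      ofReal_integral_eq_lintegral_ofReal (hKfin t ht) (ae_of_all _ fun x => Real.exp_nonneg _)]
  -- ## Step 3 : integrability of x⁻¹ on [1,∞) via Tonelli
  have hinvlt : (∫⁻ x in Ici (1:ℝ), ENNReal.ofReal x⁻¹ ∂μ) < ⊤ := by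
    have hmeas2 : Measurable fun p : ℝ × ℝ => ENNReal.ofReal (Real.exp (-(p.1*p.2))) := by
      fun_prop
    have hswap := lintegral_lintegral_swap (μ := volume.restrict (Ioo (0:ℝ) 1))
      (ν := μ.restrict (Ici (0:ℝ)))
      (f := fun t x => ENNReal.ofReal (Real.exp (-(t*x)))) hmeas2.aemeasurable
    have hLHS : (∫⁻ t in Ioo (0:ℝ) 1,
        ∫⁻ x in Ici (0:ℝ), ENNReal.ofReal (Real.exp (-(t*x))) ∂μ) < ⊤ := by
      have heq : (∫⁻ t in Ioo (0:ℝ) 1,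
          ∫⁻ x in Ici (0:ℝ), ENNReal.ofReal (Real.exp (-(t*x))) ∂μ)
          = ∫⁻ t in Ioo (0:ℝ) 1, ENNReal.ofReal (K t) := by
        apply setLIntegral_congr_fun measurableSet_Ioo
        exact fun t ht => hKofReal t ht.1
      rw [heq]
      have h2 := hKint.2
      rw [hasFiniteIntegral_iff_ofReal ?hnn] at h2
      · exact h2
      case hnn =>
        rw [EventuallyLE, ae_restrict_iff' measurableSet_Ioo]
        exact ae_of_all _ fun t ht => hKnn t ht.1
    rw [hswap] at hLHS
    -- lower bound the inner integral on [1,∞)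
    have hx1 : ∀ x : ℝ, 1 ≤ x →
        ENNReal.ofReal (Real.exp (-1)) * ENNReal.ofReal x⁻¹
          ≤ ∫⁻ t in Ioo (0:ℝ) 1, ENNReal.ofReal (Real.exp (-(t*x))) := by
      intro x hx
      have hxpos : (0:ℝ) < x := lt_of_lt_of_le one_pos hx
      have hinvle : x⁻¹ ≤ 1 := by
        rw [inv_le_one_iff₀]; right; exact hx
      calc ENNReal.ofReal (Real.exp (-1)) * ENNReal.ofReal x⁻¹
          = ∫⁻ _ in Ioo (0:ℝ) x⁻¹, ENNReal.ofReal (Real.exp (-1)) := by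
            rw [setLIntegral_const, Real.volume_Ioo]
            norm_num
        _ ≤ ∫⁻ t in Ioo (0:ℝ) x⁻¹, ENNReal.ofReal (Real.exp (-(t*x))) := by
            apply setLIntegral_mono (by fun_prop)
            intro t ht
            apply ENNReal.ofReal_le_ofReal
            apply Real.exp_le_exp.mpr
            have : t * x ≤ 1 := by
              have := mul_le_mul_of_nonneg_right ht.2.le hxpos.le
              rwa [inv_mul_cancel₀ hxpos.ne'] at this
            linarith
        _ ≤ ∫⁻ t in Ioo (0:ℝ) 1, ENNReal.ofReal (Real.exp (-(t*x))) :=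
            lintegral_mono_set (Ioo_subset_Ioo le_rfl hinvle)
    have hbound : ENNReal.ofReal (Real.exp (-1)) * (∫⁻ x in Ici (1:ℝ), ENNReal.ofReal x⁻¹ ∂μ) < ⊤ := by
      rw [← lintegral_const_mul _ (by fun_prop : Measurable fun x : ℝ => ENNReal.ofReal x⁻¹)]
      calc (∫⁻ x in Ici (1:ℝ), ENNReal.ofReal (Real.exp (-1)) * ENNReal.ofReal x⁻¹ ∂μ)
          ≤ ∫⁻ x in Ici (1:ℝ),
              (∫⁻ t in Ioo (0:ℝ) 1, ENNReal.ofReal (Real.exp (-(t*x)))) ∂μ := by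
            apply lintegral_mono_ae
            rw [ae_restrict_iff' measurableSet_Ici]
            exact ae_of_all _ fun x hx => hx1 x hx
        _ ≤ ∫⁻ x in Ici (0:ℝ),
              (∫⁻ t in Ioo (0:ℝ) 1, ENNReal.ofReal (Real.exp (-(t*x)))) ∂μ :=
            lintegral_mono_set (Ici_subset_Ici.mpr zero_le_one)
        _ < ⊤ := hLHS
    by_contra h
    push_neg at h
    rw [top_le_iff.mp h, ENNReal.mul_top (ENNReal.ofReal_pos.mpr (Real.exp_pos _)).ne'] at hbound
    exact lt_irrefl _ hbound
  have hinv : IntegrableOn (fun x : ℝ => x⁻¹) (Ici 1) μ := by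
    refine ⟨measurable_inv.aestronglyMeasurable, ?_⟩
    rw [hasFiniteIntegral_iff_ofReal ?hnn]
    · exact hinvlt
    case hnn =>
      rw [EventuallyLE, ae_restrict_iff' measurableSet_Ici]
      exact ae_of_all _ fun x hx => inv_nonneg.mpr (le_trans zero_le_one hx)
  -- ## Step 4 : μ {0} = 0
  have h0 : μ {0} = 0 := by
    have hle : ∀ t : ℝ, 0 < t → μ {0} ≤ ENNReal.ofReal (K t) := by
      intro t ht
      calc μ {0} = ENNReal.ofReal (Real.exp (-(t*0))) * μ {0} := by norm_num
        _ = ∫⁻ x in ({0}:Set ℝ), ENNReal.ofReal (Real.exp (-(t*x))) ∂μ :=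
            (lintegral_singleton (fun x : ℝ => ENNReal.ofReal (Real.exp (-(t*x)))) 0).symm
        _ ≤ ∫⁻ x in Ici (0:ℝ), ENNReal.ofReal (Real.exp (-(t*x))) ∂μ :=
            lintegral_mono_set (by simp)
        _ = ENNReal.ofReal (K t) := hKofReal t ht
    have htend : Tendsto (fun t : ℝ => ENNReal.ofReal (K t)) atTop (nhds 0) := by
      have := ENNReal.tendsto_ofReal hK0
      simpa using this
    have : μ {0} ≤ 0 :=
      ge_of_tendsto htend ((eventually_gt_atTop 0).mono fun t ht => hle t ht)
    exact le_antisymm this zero_le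
  -- ## Step 5 : local integrability of K on (0, A]
  have hKloc : ∀ A : ℝ, IntegrableOn K (Ioc 0 A) := by
    intro A
    have h1 : IntegrableOn K (Icc (2⁻¹) (max 1 A)) := by
      apply AntitoneOn.integrableOn_isCompact isCompact_Icc
      apply hKanti.mono
      intro y hy
      have : (0:ℝ) < 2⁻¹ := by norm_num
      exact lt_of_lt_of_le this hy.1
    have h2 : IntegrableOn K (Ioo 0 1 ∪ Icc (2⁻¹) (max 1 A)) := hKint.union h1
    apply h2.mono_set
    intro t ht
    rcases lt_or_ge t 1 with h | h
    · exact Or.inl ⟨ht.1, h⟩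
    · refine Or.inr ⟨le_trans (by norm_num) h, le_trans ht.2 (le_max_right _ _)⟩
  refine ⟨hfin 1, hinv, h0, ?_⟩
  -- ## Step 6 : the Fourier transforms
  intro ω hω
  -- the dominating function
  set g : ℝ → ℝ := fun x => 2 / Real.sqrt (x^2 + ω^2) with hg_def
  have hgcont : Continuous g := by
    apply continuous_const.div (by fun_prop)
    intro x
    exact (Real.sqrt_pos.mpr (by positivity)).ne'
  have hg1 : IntegrableOn g (Icc 0 1) μ := by
    have hc : IntegrableOn (fun _ : ℝ => 2 / |ω|) (Icc 0 1) μ := by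
      exact integrableOn_const (hfin 1).ne
    refine hc.mono' hgcont.aestronglyMeasurable ?_
    apply ae_of_all
    intro x
    have hs : 0 < Real.sqrt (x^2 + ω^2) := Real.sqrt_pos.mpr (by positivity)
    rw [Real.norm_eq_abs, abs_of_nonneg (by positivity)]
    apply div_le_div_of_nonneg_left (by norm_num) (abs_pos.mpr hω)
    calc |ω| = Real.sqrt (ω^2) := (Real.sqrt_sq_eq_abs ω).symm
      _ ≤ Real.sqrt (x^2 + ω^2) := Real.sqrt_le_sqrt (by nlinarith)
  have hg2 : IntegrableOn g (Ici 1) μ := by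
    have hc : IntegrableOn (fun x : ℝ => 2 * x⁻¹) (Ici 1) μ := hinv.const_mul 2
    refine hc.mono' hgcont.aestronglyMeasurable ?_
    rw [ae_restrict_iff' measurableSet_Ici]
    apply ae_of_all
    intro x hx
    have hxpos : (0:ℝ) < x := lt_of_lt_of_le one_pos hx
    have hs : 0 < Real.sqrt (x^2 + ω^2) := Real.sqrt_pos.mpr (by positivity)
    have h2x : 2 * x⁻¹ = 2 / x := by rw [div_eq_mul_inv]
    rw [Real.norm_eq_abs, abs_of_nonneg (by positivity), h2x]
    apply div_le_div_of_nonneg_left (by norm_num) hxpos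
    calc x = Real.sqrt (x^2) := by rw [Real.sqrt_sq hxpos.le]
      _ ≤ Real.sqrt (x^2 + ω^2) := Real.sqrt_le_sqrt (by nlinarith)
  have hg : IntegrableOn g (Ici 0) μ := by
    apply (hg1.union hg2).mono_set
    intro x hx
    rcases le_or_gt x 1 with h | h
    · exact Or.inl ⟨hx, h⟩
    · exact Or.inr h.le
  -- the complex limit function L
  set L : ℝ → ℂ := fun x => ((x:ℂ) + ω*Complex.I) / ((x^2 + ω^2 : ℝ):ℂ) with hL_def
  have hLcont : Continuous L := by
    apply Continuous.div (by fun_prop) (by fun_prop)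
    intro x
    have hs : (0:ℝ) < x^2 + ω^2 := by positivity
    exact_mod_cast Complex.ofReal_ne_zero.mpr hs.ne'
  have hLint : IntegrableOn L (Ici 0) μ := by
    refine hg.mono' hLcont.aestronglyMeasurable ?_
    exact ae_of_all _ fun x => cm_L_bound x ω hω
  -- integrability of the two real target functions
  have hcosInt : IntegrableOn (fun x => x / (x ^ 2 + ω ^ 2)) (Ici 0) μ := by
    have hc : Continuous fun x : ℝ => x / (x ^ 2 + ω ^ 2) :=
      Continuous.div (by fun_prop) (by fun_prop) (fun x => by positivity)
    refine hg.mono' hc.aestronglyMeasurable ?_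
    apply ae_of_all
    intro x
    rw [Real.norm_eq_abs, ← cm_L_re x ω]
    exact le_trans (Complex.abs_re_le_norm _) (cm_L_bound x ω hω)
  have hsinInt : IntegrableOn (fun x => ω / (x ^ 2 + ω ^ 2)) (Ici 0) μ := by
    have hc : Continuous fun x : ℝ => ω / (x ^ 2 + ω ^ 2) :=
      Continuous.div (by fun_prop) (by fun_prop) (fun x => by positivity)
    refine hg.mono' hc.aestronglyMeasurable ?_
    apply ae_of_all
    intro x
    rw [Real.norm_eq_abs, ← cm_L_im x ω]
    exact le_trans (Complex.abs_im_le_norm _) (cm_L_bound x ω hω)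
  -- the complex partial transforms G
  set G : ℝ → ℝ → ℂ := fun A x =>
    (Complex.exp ((-(x:ℂ) + ω*Complex.I) * A) - 1) / (-(x:ℂ) + ω*Complex.I) with hG_def
  have hGcont : ∀ A : ℝ, Continuous (fun x => G A x) := by
    intro A
    apply Continuous.div (by fun_prop) (by fun_prop)
    intro x
    exact cm_ne x ω hω
  -- a.e. positivity on the restricted measure
  have haepos : ∀ᵐ x ∂(μ.restrict (Ici (0:ℝ))), 0 < x := by
    rw [ae_iff]
    have hset : {x : ℝ | ¬ 0 < x} = Iic 0 := by ext x; simp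
    rw [hset, Measure.restrict_apply measurableSet_Iic]
    have : Iic (0:ℝ) ∩ Ici 0 = {0} := by
      ext x
      simp only [mem_inter_iff, mem_Iic, mem_Ici, mem_singleton_iff]
      constructor
      · rintro ⟨h1, h2⟩; linarith
      · rintro rfl; exact ⟨le_rfl, le_rfl⟩
    rw [this, h0]
  -- Fubini : the partial transform as a μ-integral
  have hcomplex : ∀ A : ℝ, 0 ≤ A →
      (∫ t in Ioc (0:ℝ) A, (K t : ℂ) * Complex.exp ((ω*t : ℝ) * Complex.I))
        = ∫ x in Ici (0:ℝ), G A x ∂μ := by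
    intro A hA
    have hmeasP : AEStronglyMeasurable
        (Function.uncurry fun (t x : ℝ) => Complex.exp ((-(x:ℂ) + ω*Complex.I) * t))
        ((volume.restrict (Ioc (0:ℝ) A)).prod (μ.restrict (Ici (0:ℝ)))) := by
      apply Continuous.aestronglyMeasurable
      have : Continuous fun p : ℝ × ℝ => ((-(p.2:ℂ) + ω*Complex.I) * p.1) := by fun_prop
      exact Complex.continuous_exp.comp this
    have hfub : Integrable
        (Function.uncurry fun (t x : ℝ) => Complex.exp ((-(x:ℂ) + ω*Complex.I) * t))
        ((volume.restrict (Ioc (0:ℝ) A)).prod (μ.restrict (Ici (0:ℝ)))) := by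
      rw [integrable_prod_iff hmeasP]
      constructor
      · rw [ae_restrict_iff' measurableSet_Ioc]
        apply ae_of_all
        intro t ht
        refine Integrable.mono' (hKfin t ht.1) ?_ ?_
        · apply Continuous.aestronglyMeasurable
          have : Continuous fun x : ℝ => ((-(x:ℂ) + ω*Complex.I) * t) := by fun_prop
          exact Complex.continuous_exp.comp this
        · exact ae_of_all _ fun x => le_of_eq (cm_norm x ω t)
      · apply Integrable.congr (hKloc A)
        rw [EventuallyEq, ae_restrict_iff' measurableSet_Ioc]
        apply ae_of_all
        intro t ht
        simp only [Function.uncurry]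
        rw [hK t ht.1]
        apply integral_congr_ae
        exact ae_of_all _ fun x => (cm_norm x ω t).symm
    calc (∫ t in Ioc (0:ℝ) A, (K t : ℂ) * Complex.exp ((ω*t : ℝ) * Complex.I))
        = ∫ t in Ioc (0:ℝ) A,
            (∫ x in Ici (0:ℝ), Complex.exp ((-(x:ℂ) + ω*Complex.I) * t) ∂μ) := by
          apply integral_congr_ae
          rw [EventuallyEq, ae_restrict_iff' measurableSet_Ioc]
          apply ae_of_all
          intro t ht
          have : (∫ x in Ici (0:ℝ), Complex.exp ((-(x:ℂ) + ω*Complex.I) * t) ∂μ)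
              = ∫ x in Ici (0:ℝ),
                  Complex.exp ((ω*t : ℝ) * Complex.I) * ((Real.exp (-(t*x)) : ℝ) : ℂ) ∂μ := by
            apply integral_congr_ae
            exact ae_of_all _ fun x => cm_exp x ω t
          rw [this, integral_const_mul]
          have h2 : (∫ a in Ici (0:ℝ), ((Real.exp (-(t*a)) : ℝ) : ℂ) ∂μ)
              = ((∫ a in Ici (0:ℝ), Real.exp (-(t*a)) ∂μ : ℝ) : ℂ) := integral_ofReal
          rw [h2, ← hK t ht.1, mul_comm]
      _ = ∫ x in Ici (0:ℝ),
            (∫ t in Ioc (0:ℝ) A, Complex.exp ((-(x:ℂ) + ω*Complex.I) * t)) ∂μ :=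
          integral_integral_swap hfub
      _ = ∫ x in Ici (0:ℝ), G A x ∂μ := by
          apply integral_congr_ae
          apply ae_of_all
          intro x
          show (∫ t in Ioc (0:ℝ) A, Complex.exp ((-(x:ℂ) + ω*Complex.I) * t)) = G A x
          rw [← intervalIntegral.integral_of_le hA, cm_closed x ω A hω]
  -- integrability of the complex integrand in t
  have hKCint : ∀ A : ℝ, Integrable (fun t => (K t : ℂ) * Complex.exp ((ω*t : ℝ) * Complex.I))
      (volume.restrict (Ioc (0:ℝ) A)) := by
    intro A
    refine Integrable.mono' (hKloc A).norm ?_ ?_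
    · exact (Complex.continuous_ofReal.comp_aestronglyMeasurable (hKloc A).1).mul
        (Continuous.aestronglyMeasurable (by fun_prop))
    · apply ae_of_all
      intro t
      rw [norm_mul, Complex.norm_exp_ofReal_mul_I, mul_one, Complex.norm_real]
  -- identification of the real partial transforms
  have hcosA : ∀ A : ℝ, 0 ≤ A →
      (∫ t in (0:ℝ)..A, K t * Real.cos (ω * t)) = (∫ x in Ici (0:ℝ), G A x ∂μ).re := by
    intro A hA
    rw [intervalIntegral.integral_of_le hA, ← hcomplex A hA]
    calc (∫ t in Ioc (0:ℝ) A, K t * Real.cos (ω * t))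
        = ∫ t in Ioc (0:ℝ) A, Complex.reCLM ((K t : ℂ) * Complex.exp ((ω*t : ℝ) * Complex.I)) := by
          apply integral_congr_ae
          exact ae_of_all _ fun t => (cm_Kexp_re (K t) ω t).symm
      _ = Complex.reCLM (∫ t in Ioc (0:ℝ) A, (K t : ℂ) * Complex.exp ((ω*t : ℝ) * Complex.I)) :=
          ContinuousLinearMap.integral_comp_comm _ (hKCint A)
  have hsinA : ∀ A : ℝ, 0 ≤ A →
      (∫ t in (0:ℝ)..A, K t * Real.sin (ω * t)) = (∫ x in Ici (0:ℝ), G A x ∂μ).im := by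
    intro A hA
    rw [intervalIntegral.integral_of_le hA, ← hcomplex A hA]
    calc (∫ t in Ioc (0:ℝ) A, K t * Real.sin (ω * t))
        = ∫ t in Ioc (0:ℝ) A, Complex.imCLM ((K t : ℂ) * Complex.exp ((ω*t : ℝ) * Complex.I)) := by
          apply integral_congr_ae
          exact ae_of_all _ fun t => (cm_Kexp_im (K t) ω t).symm
      _ = Complex.imCLM (∫ t in Ioc (0:ℝ) A, (K t : ℂ) * Complex.exp ((ω*t : ℝ) * Complex.I)) :=
          ContinuousLinearMap.integral_comp_comm _ (hKCint A)
  -- dominated convergence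
  have htendG : Tendsto (fun A => ∫ x in Ici (0:ℝ), G A x ∂μ) atTop
      (nhds (∫ x in Ici (0:ℝ), L x ∂μ)) := by
    apply tendsto_integral_filter_of_dominated_convergence g
    · exact Eventually.of_forall fun A => (hGcont A).aestronglyMeasurable
    · filter_upwards [eventually_ge_atTop (0:ℝ)] with A hA
      rw [ae_restrict_iff' measurableSet_Ici]
      exact ae_of_all _ fun x hx => cm_G_bound x ω A hx hA hω
    · exact hg
    · filter_upwards [haepos] with x hx
      exact cm_tendsto x ω hx hω
  -- re and im of the limit integral
  have hre : (∫ x in Ici (0:ℝ), L x ∂μ).re = ∫ x in Ici (0:ℝ), x / (x ^ 2 + ω ^ 2) ∂μ := by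
    have h := ContinuousLinearMap.integral_comp_comm Complex.reCLM hLint
    simp only [Complex.reCLM_apply] at h
    rw [← h]
    apply integral_congr_ae
    exact ae_of_all _ fun x => cm_L_re x ω
  have him : (∫ x in Ici (0:ℝ), L x ∂μ).im = ∫ x in Ici (0:ℝ), ω / (x ^ 2 + ω ^ 2) ∂μ := by
    have h := ContinuousLinearMap.integral_comp_comm Complex.imCLM hLint
    simp only [Complex.imCLM_apply] at h
    rw [← h]
    apply integral_congr_ae
    exact ae_of_all _ fun x => cm_L_im x ω
  refine ⟨hcosInt, hsinInt, ?_, ?_⟩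
  · rw [← hre]
    apply Tendsto.congr' ?_ ((Complex.continuous_re.tendsto _).comp htendG)
    filter_upwards [eventually_ge_atTop (0:ℝ)] with A hA
    exact (hcosA A hA).symm
  · rw [← him]
    apply Tendsto.congr' ?_ ((Complex.continuous_im.tendsto _).comp htendG)
    filter_upwards [eventually_ge_atTop (0:ℝ)] with A hA
    exact (hsinA A hA).symm
end

section
/- Let μ be a positive Borel measure on [0,∞) and define K(t) = ∫₀^∞ e^{−t²x} μ(dx). Assume K(t) < ∞ for all t > 0, K is integrable on (0,1), and K(t) decreases to 0 as t → ∞. Then μ({0}) = 0, ∫₁^∞ x^{−1/2} μ(dx) < ∞, and for every ω ≠ 0 the improper integrals converge with lim_{A→∞} ∫₀^A K(t)cos(ωt) dt = (√π/2) ∫₀^∞ x^{−1/2} e^{−ω²/(4x)} μ(dx) and lim_{A→∞} ∫₀^A K(t)sin(ωt) dt = ∫₀^∞ x^{−1/2} daw(ω/(2√x)) μ(dx), where daw(y) = e^{−y²} ∫₀^y e^{s²} ds is Dawson's integral; both right-hand sides are finite. (Equivalently, 𝒦cos(ω) ± i𝒦sin(ω) = (√π/2)∫₀^∞ x^{−1/2}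 w(±ω/(2√x)) μ(dx), where w(z) = e^{−z²}erfc(−iz) is the Faddeeva function, whose value at real y is e^{−y²} + (2i/√π)daw(y).) -/
open MeasureTheory Filter Set

/-- Dawson's integral `daw(y) = e^{-y²} ∫₀^y e^{s²} ds`. -/
noncomputable def daw (y : ℝ) : ℝ :=
  Real.exp (-y ^ 2) * ∫ s in (0:ℝ)..y, Real.exp (s ^ 2)

namespace GKFT

open Real

lemma int_gauss : IntegrableOn (fun s : ℝ => exp (-s ^ 2)) (Ioi 0) := by
  simpa using (integrable_exp_neg_mul_sq (b := (1:ℝ)) one_pos).integrableOn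

lemma int_sgauss : IntegrableOn (fun s : ℝ => s * exp (-s ^ 2)) (Ioi 0) := by
  simpa using (integrable_mul_exp_neg_mul_sq (b := (1:ℝ)) one_pos).integrableOn

lemma int_gauss_mul {g : ℝ → ℝ} (hg : Continuous g) (hb : ∀ s, |g s| ≤ 1) :
    IntegrableOn (fun s : ℝ => exp (-s ^ 2) * g s) (Ioi 0) := by
  refine Integrable.mono int_gauss
    ((continuous_exp.comp ((continuous_pow 2).neg)).mul hg).aestronglyMeasurable ?_
  refine ae_of_all _ fun s => ?_
  rw [norm_mul, norm_eq_abs, norm_eq_abs, abs_exp]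
  exact mul_le_of_le_one_right (exp_pos _).le (hb s)

lemma int_sgauss_mul {g : ℝ → ℝ} (hg : Continuous g) (hb : ∀ s, |g s| ≤ 1) :
    IntegrableOn (fun s : ℝ => s * exp (-s ^ 2) * g s) (Ioi 0) := by
  refine Integrable.mono int_sgauss
    (((continuous_id.mul (continuous_exp.comp ((continuous_pow 2).neg)))).mul hg).aestronglyMeasurable ?_
  filter_upwards [ae_restrict_mem measurableSet_Ioi] with s hs
  rw [norm_mul, norm_eq_abs, norm_eq_abs]
  exact mul_le_of_le_one_right (abs_nonneg _) (hb s)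

end GKFT

namespace GKFT
open Real

/-- `S y = ∫_0^∞ e^{-s²} sin(2ys) ds`. -/
noncomputable def S (y : ℝ) : ℝ := ∫ s in Ioi (0:ℝ), exp (-s ^ 2) * Real.sin (2 * y * s)

/-- `C y = ∫_0^∞ e^{-s²} cos(2ys) ds`. -/
noncomputable def Cc (y : ℝ) : ℝ := ∫ s in Ioi (0:ℝ), exp (-s ^ 2) * Real.cos (2 * y * s)

lemma hasDerivAt_lin (y s : ℝ) : HasDerivAt (fun y : ℝ => 2 * y * s) (2 * s) y := by
  simpa using ((hasDerivAt_id y).const_mul 2).mul_const s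

lemma hasDerivAt_sin2 (y s : ℝ) :
    HasDerivAt (fun y => exp (-s ^ 2) * Real.sin (2 * y * s))
      (exp (-s ^ 2) * (Real.cos (2 * y * s) * (2 * s))) y :=
  (((Real.hasDerivAt_sin (2 * y * s)).comp y (hasDerivAt_lin y s))).const_mul _

lemma hasDerivAt_cos2 (y s : ℝ) :
    HasDerivAt (fun y => exp (-s ^ 2) * Real.cos (2 * y * s))
      (exp (-s ^ 2) * (-Real.sin (2 * y * s) * (2 * s))) y :=
  (((Real.hasDerivAt_cos (2 * y * s)).comp y (hasDerivAt_lin y s))).const_mul _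

lemma S_deriv (y : ℝ) :
    HasDerivAt S (∫ s in Ioi (0:ℝ), exp (-s ^ 2) * (Real.cos (2 * y * s) * (2 * s))) y := by
  have := (hasDerivAt_integral_of_dominated_loc_of_deriv_le (μ := volume.restrict (Ioi 0))
    (F := fun y s => exp (-s ^ 2) * Real.sin (2 * y * s))
    (F' := fun y s => exp (-s ^ 2) * (Real.cos (2 * y * s) * (2 * s)))
    (x₀ := y) (bound := fun s => 2 * (s * exp (-s ^ 2))) (Metric.ball_mem_nhds y one_pos)
    (Eventually.of_forall fun x => (int_gauss_mul (by fun_prop) fun s => Real.abs_sin_le_one _).1)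
    (int_gauss_mul (by fun_prop) fun s => Real.abs_sin_le_one _)
    ?_ ?_ (int_sgauss.const_mul 2) ?_).2
  · exact this
  · exact ((continuous_exp.comp ((continuous_pow 2).neg)).mul
      (((Real.continuous_cos.comp (by fun_prop)).mul (by fun_prop)))).aestronglyMeasurable
  · filter_upwards [ae_restrict_mem measurableSet_Ioi] with s hs x _
    have hs' : (0:ℝ) < s := mem_Ioi.mp hs
    have h1 : |Real.cos (2 * x * s) * (2 * s)| ≤ 2 * s := by
      rw [abs_mul]
      calc |Real.cos (2 * x * s)| * |2 * s| ≤ 1 * |2 * s| :=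
            mul_le_mul_of_nonneg_right (Real.abs_cos_le_one _) (abs_nonneg _)
        _ = 2 * s := by rw [one_mul, abs_of_nonneg (by linarith : (0:ℝ) ≤ 2 * s)]
    rw [norm_mul, norm_eq_abs, abs_exp, norm_eq_abs]
    calc exp (-s ^ 2) * |Real.cos (2 * x * s) * (2 * s)| ≤ exp (-s ^ 2) * (2 * s) :=
          mul_le_mul_of_nonneg_left h1 (exp_pos _).le
      _ = 2 * (s * exp (-s ^ 2)) := by ring
  · exact ae_of_all _ fun s x _ => hasDerivAt_sin2 x s

lemma C_deriv (y : ℝ) :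
    HasDerivAt Cc (∫ s in Ioi (0:ℝ), exp (-s ^ 2) * (-Real.sin (2 * y * s) * (2 * s))) y := by
  have := (hasDerivAt_integral_of_dominated_loc_of_deriv_le (μ := volume.restrict (Ioi 0))
    (F := fun y s => exp (-s ^ 2) * Real.cos (2 * y * s))
    (F' := fun y s => exp (-s ^ 2) * (-Real.sin (2 * y * s) * (2 * s)))
    (x₀ := y) (bound := fun s => 2 * (s * exp (-s ^ 2))) (Metric.ball_mem_nhds y one_pos)
    (Eventually.of_forall fun x => (int_gauss_mul (by fun_prop) fun s => Real.abs_cos_le_one _).1)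
    (int_gauss_mul (by fun_prop) fun s => Real.abs_cos_le_one _)
    ?_ ?_ (int_sgauss.const_mul 2) ?_).2
  · exact this
  · exact ((continuous_exp.comp ((continuous_pow 2).neg)).mul
      (((Real.continuous_sin.comp (by fun_prop)).neg.mul (by fun_prop)))).aestronglyMeasurable
  · filter_upwards [ae_restrict_mem measurableSet_Ioi] with s hs x _
    have hs' : (0:ℝ) < s := mem_Ioi.mp hs
    have h1 : |(-Real.sin (2 * x * s)) * (2 * s)| ≤ 2 * s := by
      rw [abs_mul, abs_neg]
      calc |Real.sin (2 * x * s)| * |2 * s| ≤ 1 * |2 * s| :=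
            mul_le_mul_of_nonneg_right (Real.abs_sin_le_one _) (abs_nonneg _)
        _ = 2 * s := by rw [one_mul, abs_of_nonneg (by linarith : (0:ℝ) ≤ 2 * s)]
    rw [norm_mul, norm_eq_abs, abs_exp, norm_eq_abs]
    calc exp (-s ^ 2) * |(-Real.sin (2 * x * s)) * (2 * s)| ≤ exp (-s ^ 2) * (2 * s) :=
          mul_le_mul_of_nonneg_left h1 (exp_pos _).le
      _ = 2 * (s * exp (-s ^ 2)) := by ring
  · exact ae_of_all _ fun s x _ => hasDerivAt_cos2 x s

end GKFT

namespace GKFT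
open Real

lemma cont_trig_lin (y : ℝ) : Continuous fun s : ℝ => Real.sin (2 * y * s) := by fun_prop

lemma tendsto_gauss_mul {g : ℝ → ℝ} (hb : ∀ s, |g s| ≤ 1) :
    Tendsto (fun s : ℝ => exp (-s ^ 2) * g s) atTop (nhds 0) := by
  have hexp : Tendsto (fun s : ℝ => exp (-s ^ 2)) atTop (nhds 0) := by
    have h1 : Tendsto (fun s : ℝ => -s ^ 2) atTop atBot :=
      tendsto_neg_atTop_atBot.comp (tendsto_pow_atTop two_ne_zero)
    exact Real.tendsto_exp_atBot.comp h1
  refine squeeze_zero_norm (fun s => ?_) hexp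
  rw [norm_mul, norm_eq_abs, abs_exp, norm_eq_abs]
  exact mul_le_of_le_one_right (exp_pos _).le (hb s)

lemma hasDerivAt_gauss (s : ℝ) :
    HasDerivAt (fun s : ℝ => exp (-s ^ 2)) (exp (-s ^ 2) * (-(2 * s))) s := by
  have h1 : HasDerivAt (fun s : ℝ => -s ^ 2) (-(2 * s)) s := by
    simpa using (hasDerivAt_pow 2 s).fun_neg
  exact (Real.hasDerivAt_exp _).comp s h1

lemma S_ode (y : ℝ) :
    ∫ s in Ioi (0:ℝ), exp (-s ^ 2) * (Real.cos (2 * y * s) * (2 * s)) = 1 - 2 * y * S y := by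
  set g : ℝ → ℝ := fun s => -(exp (-s ^ 2) * Real.cos (2 * y * s)) with hg
  set g' : ℝ → ℝ := fun s =>
    exp (-s ^ 2) * (Real.cos (2 * y * s) * (2 * s)) + 2 * y * (exp (-s ^ 2) * Real.sin (2 * y * s))
    with hg'
  have hderiv : ∀ s ∈ Ici (0:ℝ), HasDerivAt g (g' s) s := by
    intro s _
    have h1 : HasDerivAt (fun s : ℝ => Real.cos (2 * y * s)) (-Real.sin (2 * y * s) * (2 * y)) s :=
      (Real.hasDerivAt_cos (2 * y * s)).comp s (by simpa using ((hasDerivAt_id s).const_mul (2 * y)))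
    have h2 := ((hasDerivAt_gauss s).mul h1).fun_neg
    refine h2.congr_deriv ?_
    simp only [hg']; ring
  have hint1 : IntegrableOn (fun s => exp (-s ^ 2) * (Real.cos (2 * y * s) * (2 * s))) (Ioi 0) := by
    have := (int_sgauss_mul (g := fun s => Real.cos (2 * y * s)) (by fun_prop)
      (fun s => Real.abs_cos_le_one _)).const_mul 2
    exact this.congr (ae_of_all _ fun s => by ring)
  have hint2 : IntegrableOn (fun s => exp (-s ^ 2) * Real.sin (2 * y * s)) (Ioi 0) :=
    int_gauss_mul (by fun_prop) (fun s => Real.abs_sin_le_one _)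
  have hint : IntegrableOn g' (Ioi 0) := hint1.add (hint2.const_mul _)
  have htend : Tendsto g atTop (nhds 0) := by
    have := (tendsto_gauss_mul (g := fun s => Real.cos (2 * y * s))
      (fun s => Real.abs_cos_le_one _)).neg
    simpa using this
  have key := integral_Ioi_of_hasDerivAt_of_tendsto' hderiv hint htend
  have hg0 : g 0 = -1 := by simp [hg]
  rw [hg0] at key
  have key2 : ∫ s in Ioi (0:ℝ), g' s =
      (∫ s in Ioi (0:ℝ), exp (-s ^ 2) * (Real.cos (2 * y * s) * (2 * s)))
        + 2 * y * S y := by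
    rw [MeasureTheory.integral_add hint1 (hint2.const_mul _), integral_const_mul]
    rfl
  rw [key2] at key
  linarith [key]

lemma C_ode (y : ℝ) :
    ∫ s in Ioi (0:ℝ), exp (-s ^ 2) * (-Real.sin (2 * y * s) * (2 * s)) = -(2 * y) * Cc y := by
  set g : ℝ → ℝ := fun s => exp (-s ^ 2) * Real.sin (2 * y * s) with hg
  set g' : ℝ → ℝ := fun s =>
    exp (-s ^ 2) * (-Real.sin (2 * y * s) * (2 * s)) + 2 * y * (exp (-s ^ 2) * Real.cos (2 * y * s))
    with hg'
  have hderiv : ∀ s ∈ Ici (0:ℝ), HasDerivAt g (g' s) s := by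
    intro s _
    have h1 : HasDerivAt (fun s : ℝ => Real.sin (2 * y * s)) (Real.cos (2 * y * s) * (2 * y)) s :=
      (Real.hasDerivAt_sin (2 * y * s)).comp s (by simpa using ((hasDerivAt_id s).const_mul (2 * y)))
    have h2 := (hasDerivAt_gauss s).mul h1
    refine h2.congr_deriv ?_
    simp only [hg']; ring
  have hint1 : IntegrableOn (fun s => exp (-s ^ 2) * (-Real.sin (2 * y * s) * (2 * s))) (Ioi 0) := by
    have := (int_sgauss_mul (g := fun s => -Real.sin (2 * y * s)) (by fun_prop)
      (fun s => by rw [abs_neg]; exact Real.abs_sin_le_one _)).const_mul 2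
    exact this.congr (ae_of_all _ fun s => by ring)
  have hint2 : IntegrableOn (fun s => exp (-s ^ 2) * Real.cos (2 * y * s)) (Ioi 0) :=
    int_gauss_mul (by fun_prop) (fun s => Real.abs_cos_le_one _)
  have hint : IntegrableOn g' (Ioi 0) := hint1.add (hint2.const_mul _)
  have htend : Tendsto g atTop (nhds 0) :=
    tendsto_gauss_mul (fun s => Real.abs_sin_le_one _)
  have key := integral_Ioi_of_hasDerivAt_of_tendsto' hderiv hint htend
  have hg0 : g 0 = 0 := by simp [hg]
  rw [hg0] at key
  have key2 : ∫ s in Ioi (0:ℝ), g' s =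
      (∫ s in Ioi (0:ℝ), exp (-s ^ 2) * (-Real.sin (2 * y * s) * (2 * s)))
        + 2 * y * Cc y := by
    rw [MeasureTheory.integral_add hint1 (hint2.const_mul _), integral_const_mul]
    rfl
  rw [key2] at key
  linarith [key]

lemma S_hasDeriv (y : ℝ) : HasDerivAt S (1 - 2 * y * S y) y := by
  have := S_deriv y
  rwa [S_ode y] at this

lemma C_hasDeriv (y : ℝ) : HasDerivAt Cc (-(2 * y) * Cc y) y := by
  have := C_deriv y
  rwa [C_ode y] at this

lemma hasDerivAt_expsq (y : ℝ) :
    HasDerivAt (fun y : ℝ => exp (y ^ 2)) (exp (y ^ 2) * (2 * y)) y := by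
  have h1 : HasDerivAt (fun s : ℝ => s ^ 2) (2 * y) y := by simpa using hasDerivAt_pow 2 y
  exact (Real.hasDerivAt_exp _).comp y h1

lemma S_eq_daw (y : ℝ) : S y = daw y := by
  set u : ℝ → ℝ := fun y => exp (y ^ 2) * S y - ∫ s in (0:ℝ)..y, exp (s ^ 2) with hu
  have hc : Continuous fun s : ℝ => exp (s ^ 2) := by fun_prop
  have hderiv : ∀ z : ℝ, HasDerivAt u 0 z := by
    intro z
    have h1 : HasDerivAt (fun y : ℝ => exp (y ^ 2) * S y)
        (exp (z ^ 2) * (2 * z) * S z + exp (z ^ 2) * (1 - 2 * z * S z)) z :=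
      (hasDerivAt_expsq z).mul (S_hasDeriv z)
    have h2 : HasDerivAt (fun y : ℝ => ∫ s in (0:ℝ)..y, exp (s ^ 2)) (exp (z ^ 2)) z :=
      intervalIntegral.integral_hasDerivAt_right (hc.intervalIntegrable _ _)
        (hc.stronglyMeasurableAtFilter _ _) hc.continuousAt
    have h3 := h1.sub h2
    refine h3.congr_deriv ?_
    ring
  have hconst : u y = u 0 :=
    is_const_of_deriv_eq_zero (fun z => (hderiv z).differentiableAt)
      (fun z => (hderiv z).deriv) y 0
  have hS0 : S 0 = 0 := by
    simp [S]
  have hu0 : u 0 = 0 := by simp [hu, hS0]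
  rw [hu0] at hconst
  have : exp (y ^ 2) * S y = ∫ s in (0:ℝ)..y, exp (s ^ 2) := by
    have := hconst; simp only [hu] at this; linarith
  rw [daw, ← this, ← mul_assoc, ← Real.exp_add]
  simp

lemma C_eq (y : ℝ) : Cc y = Real.sqrt Real.pi / 2 * exp (-y ^ 2) := by
  set u : ℝ → ℝ := fun y => exp (y ^ 2) * Cc y with hu
  have hderiv : ∀ z : ℝ, HasDerivAt u 0 z := by
    intro z
    have h1 : HasDerivAt (fun y : ℝ => exp (y ^ 2) * Cc y)
        (exp (z ^ 2) * (2 * z) * Cc z + exp (z ^ 2) * (-(2 * z) * Cc z)) z :=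
      (hasDerivAt_expsq z).mul (C_hasDeriv z)
    convert h1 using 1
    ring
  have hconst : u y = u 0 :=
    is_const_of_deriv_eq_zero (fun z => (hderiv z).differentiableAt)
      (fun z => (hderiv z).deriv) y 0
  have hC0 : Cc 0 = Real.sqrt Real.pi / 2 := by
    have h1 : Cc 0 = ∫ s in Ioi (0:ℝ), exp (-s ^ 2) := by
      simp [Cc]
    have h2 := integral_gaussian_Ioi 1
    rw [div_one] at h2
    simp only [neg_mul, one_mul] at h2
    rw [h1, h2]
  have hu0 : u 0 = Cc 0 := by simp [hu]
  rw [hu0, hC0] at hconst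
  have h3 : exp (-y ^ 2) * (exp (y ^ 2) * Cc y)
      = exp (-y ^ 2) * (Real.sqrt Real.pi / 2) := by
    have : exp (y ^ 2) * Cc y = Real.sqrt Real.pi / 2 := hconst
    rw [this]
  rw [← mul_assoc, ← Real.exp_add, neg_add_cancel, Real.exp_zero, one_mul] at h3
  rw [h3, mul_comm]

end GKFT

namespace GKFT
open Real

lemma int_gauss_x {x : ℝ} (hx : 0 < x) :
    IntegrableOn (fun t : ℝ => exp (-(t ^ 2 * x))) (Ioi 0) := by
  exact ((integrable_exp_neg_mul_sq hx).integrableOn).congr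
    (ae_of_all _ fun t => by simp only; congr 1; ring)

lemma int_gauss_x_mul {x : ℝ} (hx : 0 < x) {g : ℝ → ℝ} (hg : Continuous g)
    (hb : ∀ s, |g s| ≤ 1) :
    IntegrableOn (fun t : ℝ => exp (-(t ^ 2 * x)) * g t) (Ioi 0) := by
  refine Integrable.mono (int_gauss_x hx)
    ((by fun_prop : Continuous fun t : ℝ => exp (-(t ^ 2 * x)) * g t)).aestronglyMeasurable ?_
  refine ae_of_all _ fun s => ?_
  rw [norm_mul, norm_eq_abs, norm_eq_abs, abs_exp]
  exact mul_le_of_le_one_right (exp_pos _).le (hb s)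

lemma cos_formula {x : ℝ} (ω : ℝ) (hx : 0 < x) :
    ∫ t in Ioi (0:ℝ), exp (-(t ^ 2 * x)) * Real.cos (ω * t)
      = 1 / Real.sqrt x * (Real.sqrt Real.pi / 2 * exp (-(ω ^ 2 / (4 * x)))) := by
  set b : ℝ := Real.sqrt x with hbdef
  have hb : 0 < b := Real.sqrt_pos.mpr hx
  have hb2 : b ^ 2 = x := Real.sq_sqrt hx.le
  set y : ℝ := ω / (2 * b) with hydef
  have h1 : ∀ t : ℝ, (fun s : ℝ => exp (-s ^ 2) * Real.cos (2 * y * s)) (b * t)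
      = exp (-(t ^ 2 * x)) * Real.cos (ω * t) := by
    intro t
    simp only
    have e1 : -(b * t) ^ 2 = -(t ^ 2 * x) := by rw [mul_pow, hb2]; ring
    have e2 : 2 * y * (b * t) = ω * t := by
      rw [hydef]; field_simp
    rw [e1, e2]
  have h2 := integral_comp_mul_left_Ioi (fun s : ℝ => exp (-s ^ 2) * Real.cos (2 * y * s)) 0 hb
  rw [mul_zero] at h2
  calc ∫ t in Ioi (0:ℝ), exp (-(t ^ 2 * x)) * Real.cos (ω * t)
      = ∫ t in Ioi (0:ℝ), (fun s : ℝ => exp (-s ^ 2) * Real.cos (2 * y * s)) (b * t) := by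
        refine setIntegral_congr_fun measurableSet_Ioi fun t _ => ?_
        exact (h1 t).symm
    _ = b⁻¹ • ∫ s in Ioi (0:ℝ), exp (-s ^ 2) * Real.cos (2 * y * s) := h2
    _ = 1 / Real.sqrt x * (Real.sqrt Real.pi / 2 * exp (-(ω ^ 2 / (4 * x)))) := by
        rw [smul_eq_mul]
        have : (∫ s in Ioi (0:ℝ), exp (-s ^ 2) * Real.cos (2 * y * s))
            = Real.sqrt Real.pi / 2 * exp (-y ^ 2) := C_eq y
        rw [this]
        have hy2 : y ^ 2 = ω ^ 2 / (4 * x) := by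
          rw [hydef, div_pow, mul_pow, hb2]; norm_num
        rw [hy2, one_div]

lemma sin_formula {x : ℝ} (ω : ℝ) (hx : 0 < x) :
    ∫ t in Ioi (0:ℝ), exp (-(t ^ 2 * x)) * Real.sin (ω * t)
      = 1 / Real.sqrt x * daw (ω / (2 * Real.sqrt x)) := by
  set b : ℝ := Real.sqrt x with hbdef
  have hb : 0 < b := Real.sqrt_pos.mpr hx
  have hb2 : b ^ 2 = x := Real.sq_sqrt hx.le
  set y : ℝ := ω / (2 * b) with hydef
  have h1 : ∀ t : ℝ, (fun s : ℝ => exp (-s ^ 2) * Real.sin (2 * y * s)) (b * t)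
      = exp (-(t ^ 2 * x)) * Real.sin (ω * t) := by
    intro t
    simp only
    have e1 : -(b * t) ^ 2 = -(t ^ 2 * x) := by rw [mul_pow, hb2]; ring
    have e2 : 2 * y * (b * t) = ω * t := by
      rw [hydef]; field_simp
    rw [e1, e2]
  have h2 := integral_comp_mul_left_Ioi (fun s : ℝ => exp (-s ^ 2) * Real.sin (2 * y * s)) 0 hb
  rw [mul_zero] at h2
  calc ∫ t in Ioi (0:ℝ), exp (-(t ^ 2 * x)) * Real.sin (ω * t)
      = ∫ t in Ioi (0:ℝ), (fun s : ℝ => exp (-s ^ 2) * Real.sin (2 * y * s)) (b * t) := by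
        refine setIntegral_congr_fun measurableSet_Ioi fun t _ => ?_
        exact (h1 t).symm
    _ = b⁻¹ • ∫ s in Ioi (0:ℝ), exp (-s ^ 2) * Real.sin (2 * y * s) := h2
    _ = 1 / Real.sqrt x * daw (ω / (2 * Real.sqrt x)) := by
        rw [smul_eq_mul]
        have : (∫ s in Ioi (0:ℝ), exp (-s ^ 2) * Real.sin (2 * y * s)) = daw y := S_eq_daw y
        rw [this, one_div]

end GKFT

namespace GKFT
open Real

lemma parts_bound {x ω A : ℝ} (hx : 0 < x) (hω : ω ≠ 0) (hA : 0 ≤ A)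
    {v v' : ℝ → ℝ} (hv : ∀ t, HasDerivAt v (v' t) t) (hv'c : Continuous v')
    (hvb : ∀ t, |v t| ≤ 1 / |ω|) (hv'b : ∀ t, |v' t| ≤ 1) :
    |∫ t in (0:ℝ)..A, exp (-(t ^ 2 * x)) * v' t| ≤ 3 / |ω| := by
  have hωa : 0 < |ω| := abs_pos.mpr hω
  have hvc : Continuous v := by
    exact continuous_iff_continuousAt.2 fun t => (hv t).continuousAt
  set u : ℝ → ℝ := fun t => exp (-(t ^ 2 * x)) with hudef
  set u' : ℝ → ℝ := fun t => exp (-(t ^ 2 * x)) * (-(2 * t * x)) with hu'def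
  have hud : ∀ t : ℝ, HasDerivAt u (u' t) t := by
    intro t
    have h1 : HasDerivAt (fun t : ℝ => -(t ^ 2 * x)) (-(2 * t * x)) t := by
      have := ((hasDerivAt_pow 2 t).mul_const x).fun_neg
      simpa using this
    exact (Real.hasDerivAt_exp _).comp t h1
  have hu'c : Continuous u' := by fun_prop
  have huc : Continuous u := by fun_prop
  have hparts := intervalIntegral.integral_mul_deriv_eq_deriv_mul
    (u := u) (v := v) (u' := u') (v' := v') (a := 0) (b := A)
    (fun t _ => hud t) (fun t _ => hv t)
    (hu'c.intervalIntegrable _ _) (hv'c.intervalIntegrable _ _)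
  have hFTC : ∫ t in (0:ℝ)..A, exp (-(t ^ 2 * x)) * (2 * t * x) = 1 - exp (-(A ^ 2 * x)) := by
    have h0 := intervalIntegral.integral_eq_sub_of_hasDerivAt
      (f := fun t : ℝ => -exp (-(t ^ 2 * x))) (f' := fun t : ℝ => exp (-(t ^ 2 * x)) * (2 * t * x))
      (a := 0) (b := A)
      (fun t _ => by
        have := (hud t).fun_neg
        convert this using 1
        simp only [hu'def]; ring)
      ((by fun_prop : Continuous fun t : ℝ => exp (-(t ^ 2 * x)) * (2 * t * x)).intervalIntegrable _ _)
    rw [h0]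
    simp [Real.exp_zero]
    ring
  have habs : |∫ t in (0:ℝ)..A, u' t * v t| ≤ 1 / |ω| := by
    have h1 : |∫ t in (0:ℝ)..A, u' t * v t| ≤ ∫ t in (0:ℝ)..A, |u' t * v t| :=
      intervalIntegral.abs_integral_le_integral_abs hA
    have h2 : ∫ t in (0:ℝ)..A, |u' t * v t|
        ≤ ∫ t in (0:ℝ)..A, exp (-(t ^ 2 * x)) * (2 * t * x) * (1 / |ω|) := by
      refine intervalIntegral.integral_mono_on hA
        ((hu'c.mul hvc).abs.intervalIntegrable _ _)
        ((by fun_prop : Continuous fun t : ℝ =>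
          exp (-(t ^ 2 * x)) * (2 * t * x) * (1 / |ω|)).intervalIntegrable _ _) ?_
      intro t ht
      have ht0 : 0 ≤ t := ht.1
      have e1 : |u' t| = exp (-(t ^ 2 * x)) * (2 * t * x) := by
        rw [hu'def]
        simp only
        rw [abs_mul, abs_exp, abs_neg]
        congr 1
        rw [abs_of_nonneg (by positivity : (0:ℝ) ≤ 2 * t * x)]
      rw [abs_mul, e1]
      exact mul_le_mul (le_refl _) (hvb t) (abs_nonneg _) (by positivity)
    have h3 : ∫ t in (0:ℝ)..A, exp (-(t ^ 2 * x)) * (2 * t * x) * (1 / |ω|)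
        = (1 - exp (-(A ^ 2 * x))) * (1 / |ω|) := by
      rw [intervalIntegral.integral_mul_const, hFTC]
    have h4 : (1 - exp (-(A ^ 2 * x))) * (1 / |ω|) ≤ 1 * (1 / |ω|) := by
      have : 0 < exp (-(A ^ 2 * x)) := exp_pos _
      have hle : 1 - exp (-(A ^ 2 * x)) ≤ 1 := by linarith
      exact mul_le_mul_of_nonneg_right hle (by positivity)
    calc |∫ t in (0:ℝ)..A, u' t * v t| ≤ ∫ t in (0:ℝ)..A, |u' t * v t| := h1
      _ ≤ _ := h2
      _ = (1 - exp (-(A ^ 2 * x))) * (1 / |ω|) := h3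
      _ ≤ 1 * (1 / |ω|) := h4
      _ = 1 / |ω| := one_mul _
  have huleone : ∀ t : ℝ, |u t| ≤ 1 := by
    intro t
    rw [hudef]
    simp only
    rw [abs_exp, exp_le_one_iff]
    nlinarith [sq_nonneg t, hx]
  have hbd1 : |u A * v A| ≤ 1 / |ω| := by
    rw [abs_mul]
    calc |u A| * |v A| ≤ 1 * (1 / |ω|) :=
      mul_le_mul (huleone A) (hvb A) (abs_nonneg _) zero_le_one
    _ = 1 / |ω| := one_mul _
  have hbd0 : |u 0 * v 0| ≤ 1 / |ω| := by
    rw [abs_mul]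
    calc |u 0| * |v 0| ≤ 1 * (1 / |ω|) :=
      mul_le_mul (huleone 0) (hvb 0) (abs_nonneg _) zero_le_one
    _ = 1 / |ω| := one_mul _
  rw [hparts]
  calc |u A * v A - u 0 * v 0 - ∫ t in (0:ℝ)..A, u' t * v t|
      ≤ |u A * v A - u 0 * v 0| + |∫ t in (0:ℝ)..A, u' t * v t| := abs_sub _ _
    _ ≤ (|u A * v A| + |u 0 * v 0|) + |∫ t in (0:ℝ)..A, u' t * v t| := by
        gcongr
        exact abs_sub _ _
    _ ≤ (1 / |ω| + 1 / |ω|) + 1 / |ω| := add_le_add (add_le_add hbd1 hbd0) habs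
    _ = 3 / |ω| := by ring

lemma cos_bound {x ω A : ℝ} (hx : 0 < x) (hω : ω ≠ 0) (hA : 0 ≤ A) :
    |∫ t in (0:ℝ)..A, exp (-(t ^ 2 * x)) * Real.cos (ω * t)| ≤ 3 / |ω| := by
  refine parts_bound hx hω hA (v := fun t => Real.sin (ω * t) / ω)
    (v' := fun t => Real.cos (ω * t)) ?_ (by fun_prop) ?_ ?_
  · intro t
    have h1 : HasDerivAt (fun t : ℝ => Real.sin (ω * t)) (Real.cos (ω * t) * ω) t :=
      (Real.hasDerivAt_sin (ω * t)).comp t (by simpa using (hasDerivAt_id t).const_mul ω)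
    have := h1.div_const ω
    refine this.congr_deriv ?_
    field_simp
  · intro t
    rw [abs_div]
    gcongr
    exact Real.abs_sin_le_one _
  · exact fun t => Real.abs_cos_le_one _

lemma sin_bound {x ω A : ℝ} (hx : 0 < x) (hω : ω ≠ 0) (hA : 0 ≤ A) :
    |∫ t in (0:ℝ)..A, exp (-(t ^ 2 * x)) * Real.sin (ω * t)| ≤ 3 / |ω| := by
  refine parts_bound hx hω hA (v := fun t => -(Real.cos (ω * t)) / ω)
    (v' := fun t => Real.sin (ω * t)) ?_ (by fun_prop) ?_ ?_
  · intro t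
    have h1 : HasDerivAt (fun t : ℝ => Real.cos (ω * t)) (-Real.sin (ω * t) * ω) t :=
      (Real.hasDerivAt_cos (ω * t)).comp t (by simpa using (hasDerivAt_id t).const_mul ω)
    have := (h1.neg).div_const ω
    refine this.congr_deriv ?_
    field_simp
  · intro t
    rw [abs_div, abs_neg]
    gcongr
    exact Real.abs_cos_le_one _
  · exact fun t => Real.abs_sin_le_one _

lemma gauss_bound {x A : ℝ} (hx : 0 < x) (hA : 0 ≤ A) {g : ℝ → ℝ} (hg : Continuous g)
    (hb : ∀ s, |g s| ≤ 1) :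
    |∫ t in (0:ℝ)..A, exp (-(t ^ 2 * x)) * g t| ≤ Real.sqrt Real.pi / (2 * Real.sqrt x) := by
  have h1 : |∫ t in (0:ℝ)..A, exp (-(t ^ 2 * x)) * g t|
      ≤ ∫ t in (0:ℝ)..A, exp (-(t ^ 2 * x)) := by
    calc |∫ t in (0:ℝ)..A, exp (-(t ^ 2 * x)) * g t|
        ≤ ∫ t in (0:ℝ)..A, |exp (-(t ^ 2 * x)) * g t| :=
          intervalIntegral.abs_integral_le_integral_abs hA
      _ ≤ ∫ t in (0:ℝ)..A, exp (-(t ^ 2 * x)) := by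
          refine intervalIntegral.integral_mono_on hA
            ((((by fun_prop : Continuous fun t : ℝ => exp (-(t ^ 2 * x)) * g t)).abs).intervalIntegrable _ _)
            ((by fun_prop : Continuous fun t : ℝ => exp (-(t ^ 2 * x))).intervalIntegrable _ _) ?_
          intro t _
          rw [abs_mul, abs_exp]
          exact mul_le_of_le_one_right (exp_pos _).le (hb t)
  have h2 : ∫ t in (0:ℝ)..A, exp (-(t ^ 2 * x)) ≤ ∫ t in Ioi (0:ℝ), exp (-(t ^ 2 * x)) := by
    rw [intervalIntegral.integral_of_le hA]
    refine setIntegral_mono_set (int_gauss_x hx) (ae_of_all _ fun t => (exp_pos _).le) ?_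
    exact HasSubset.Subset.eventuallyLE Ioc_subset_Ioi_self
  have h3 : ∫ t in Ioi (0:ℝ), exp (-(t ^ 2 * x)) = Real.sqrt (Real.pi / x) / 2 := by
    have := integral_gaussian_Ioi x
    rw [← this]
    refine setIntegral_congr_fun measurableSet_Ioi fun t _ => ?_
    congr 1
    ring
  have h4 : Real.sqrt (Real.pi / x) / 2 = Real.sqrt Real.pi / (2 * Real.sqrt x) := by
    rw [Real.sqrt_div Real.pi_pos.le, div_div, mul_comm (Real.sqrt x) 2]
  calc |∫ t in (0:ℝ)..A, exp (-(t ^ 2 * x)) * g t| ≤ _ := h1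
    _ ≤ _ := h2
    _ = Real.sqrt (Real.pi / x) / 2 := h3
    _ = _ := h4

end GKFT

namespace GKFT
open Real

lemma expsq_ii (a b : ℝ) : IntervalIntegrable (fun s : ℝ => exp (s ^ 2)) volume a b :=
  (by fun_prop : Continuous fun s : ℝ => exp (s ^ 2)).intervalIntegrable a b

lemma daw_continuous : Continuous daw := by
  refine ((by fun_prop : Continuous fun y : ℝ => exp (-y ^ 2))).mul ?_
  exact intervalIntegral.continuous_primitive expsq_ii 0

lemma daw_nonneg {y : ℝ} (hy : 0 ≤ y) : 0 ≤ daw y := by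
  refine mul_nonneg (exp_pos _).le ?_
  exact intervalIntegral.integral_nonneg hy fun s _ => (exp_pos _).le

lemma daw_le_self {y : ℝ} (hy : 0 ≤ y) : daw y ≤ y := by
  have h1 : ∫ s in (0:ℝ)..y, exp (s ^ 2) ≤ ∫ s in (0:ℝ)..y, exp (y ^ 2) := by
    refine intervalIntegral.integral_mono_on hy (expsq_ii 0 y)
      (intervalIntegrable_const) fun s hs => ?_
    exact exp_le_exp.2 (by nlinarith [hs.1, hs.2])
  have h2 : ∫ s in (0:ℝ)..y, exp (y ^ 2) = y * exp (y ^ 2) := by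
    rw [intervalIntegral.integral_const, smul_eq_mul]; ring
  calc daw y = exp (-y ^ 2) * ∫ s in (0:ℝ)..y, exp (s ^ 2) := rfl
    _ ≤ exp (-y ^ 2) * (y * exp (y ^ 2)) := by
        refine mul_le_mul_of_nonneg_left ?_ (exp_pos _).le
        rw [← h2]; exact h1
    _ = y * (exp (-y ^ 2) * exp (y ^ 2)) := by ring
    _ = y := by rw [← Real.exp_add, neg_add_cancel, Real.exp_zero, mul_one]

lemma daw_le_inv {y : ℝ} (hy : 0 < y) : daw y ≤ 1 / y := by
  have hmono : ∫ s in (0:ℝ)..y, exp (s ^ 2) ≤ ∫ s in (0:ℝ)..y, exp (s * y) := by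
    refine intervalIntegral.integral_mono_on hy.le (expsq_ii 0 y)
      ((by fun_prop : Continuous fun s : ℝ => exp (s * y)).intervalIntegrable _ _)
      fun s hs => ?_
    exact exp_le_exp.2 (by nlinarith [hs.1, hs.2])
  have hFTC : ∫ s in (0:ℝ)..y, exp (s * y) = (exp (y ^ 2) - 1) / y := by
    have h0 := intervalIntegral.integral_eq_sub_of_hasDerivAt
      (f := fun s : ℝ => exp (s * y) / y) (f' := fun s : ℝ => exp (s * y)) (a := 0) (b := y)
      (fun s _ => by
        have h1 : HasDerivAt (fun s : ℝ => s * y) y s := by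
          simpa using (hasDerivAt_id s).mul_const y
        have h2 := ((Real.hasDerivAt_exp (s * y)).comp s h1).div_const y
        refine h2.congr_deriv ?_
        field_simp)
      ((by fun_prop : Continuous fun s : ℝ => exp (s * y)).intervalIntegrable _ _)
    rw [h0]
    simp only [zero_mul, Real.exp_zero]
    rw [← pow_two]
    ring
  calc daw y = exp (-y ^ 2) * ∫ s in (0:ℝ)..y, exp (s ^ 2) := rfl
    _ ≤ exp (-y ^ 2) * ((exp (y ^ 2) - 1) / y) := by
        refine mul_le_mul_of_nonneg_left ?_ (exp_pos _).le
        rw [← hFTC]; exact hmono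
    _ = (exp (-y ^ 2) * exp (y ^ 2) - exp (-y ^ 2)) / y := by ring
    _ = (1 - exp (-y ^ 2)) / y := by rw [← Real.exp_add, neg_add_cancel, Real.exp_zero]
    _ ≤ 1 / y := by
        gcongr
        linarith [Real.exp_pos (-y ^ 2)]

lemma daw_neg (y : ℝ) : daw (-y) = -daw y := by
  have h1 : ∫ s in (0:ℝ)..(-y), exp (s ^ 2) = -∫ s in (0:ℝ)..y, exp (s ^ 2) := by
    have h2 := intervalIntegral.integral_comp_neg (a := (0:ℝ)) (b := y)
      (fun s : ℝ => exp (s ^ 2))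
    simp only [neg_sq, neg_zero] at h2
    rw [intervalIntegral.integral_symm, ← h2]
  rw [daw, daw, h1, neg_sq]
  ring

lemma abs_daw_le_abs_self (y : ℝ) : |daw y| ≤ |y| := by
  rcases le_or_gt 0 y with hy | hy
  · rw [abs_of_nonneg (daw_nonneg hy), abs_of_nonneg hy]
    exact daw_le_self hy
  · have h1 : daw y = -daw (-y) := by rw [daw_neg, neg_neg]
    rw [h1, abs_neg, abs_of_nonneg (daw_nonneg (by linarith)), abs_of_neg hy]
    exact daw_le_self (by linarith)

lemma abs_daw_le_inv (y : ℝ) (hy : y ≠ 0) : |daw y| ≤ 1 / |y| := by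
  rcases lt_or_gt_of_ne hy with hy' | hy'
  · have h1 : daw y = -daw (-y) := by rw [daw_neg, neg_neg]
    rw [h1, abs_neg, abs_of_nonneg (daw_nonneg (by linarith)), abs_of_neg hy']
    exact daw_le_inv (by linarith)
  · rw [abs_of_nonneg (daw_nonneg hy'.le), abs_of_pos hy']
    exact daw_le_inv hy'

end GKFT

namespace GKFT
open Real

variable {μ : Measure ℝ}

lemma exp_int (h : IntegrableOn (fun x => Real.exp (-((1:ℝ) ^ 2 * x))) (Ici 0) μ) :
    IntegrableOn (fun x : ℝ => Real.exp (-x)) (Ici 0) μ :=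
  h.congr (ae_of_all _ fun x => by norm_num)

lemma Icc_fin (h : IntegrableOn (fun x : ℝ => Real.exp (-x)) (Ici 0) μ) (n : ℝ) :
    μ.restrict (Ici 0) (Icc 0 n) < ⊤ := by
  have h2 := h.measure_ge_lt_top (ε := Real.exp (-n)) (Real.exp_pos _)
  refine lt_of_le_of_lt (measure_mono ?_) h2
  intro x hx
  simp only [mem_setOf_eq]
  exact Real.exp_le_exp.2 (by linarith [hx.2])

lemma sigmaFinite_restrict (h : IntegrableOn (fun x : ℝ => Real.exp (-x)) (Ici 0) μ) :
    SigmaFinite (μ.restrict (Ici 0)) := by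
  refine ⟨⟨⟨fun n => Iio 0 ∪ Icc 0 n, fun _ => trivial, fun n => ?_, ?_⟩⟩⟩
  · refine lt_of_le_of_lt (measure_union_le _ _) ?_
    have h1 : μ.restrict (Ici 0) (Iio 0) = 0 := by
      rw [Measure.restrict_apply measurableSet_Iio]
      have : Iio (0:ℝ) ∩ Ici 0 = ∅ := by
        ext x
        simp only [mem_inter_iff, mem_Iio, mem_Ici, mem_empty_iff_false, iff_false, not_and,
          not_le]
        exact fun h' => h'
      rw [this, measure_empty]
    rw [h1, zero_add]
    exact Icc_fin h n
  · ext x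
    simp only [mem_iUnion, mem_union, mem_Iio, mem_Icc, mem_univ, iff_true]
    rcases lt_or_ge x 0 with hx | hx
    · exact ⟨0, Or.inl hx⟩
    · exact ⟨⌈x⌉₊, Or.inr ⟨hx, Nat.le_ceil x⟩⟩

lemma measure_zero_singleton {K : ℝ → ℝ}
    (hKfin : ∀ t > 0, IntegrableOn (fun x => Real.exp (-(t ^ 2 * x))) (Ici 0) μ)
    (hK : ∀ t > 0, K t = ∫ x in Ici (0:ℝ), Real.exp (-(t ^ 2 * x)) ∂μ)
    (hK0 : Tendsto K atTop (nhds 0)) : μ {0} = 0 := by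
  have hsub : ({0} : Set ℝ) ⊆ Ici 0 := singleton_subset_iff.mpr self_mem_Ici
  have hres : μ.restrict (Ici 0) {0} = μ {0} := by
    rw [Measure.restrict_apply (measurableSet_singleton 0), inter_eq_left.mpr hsub]
  have hfin : μ {0} < ⊤ := by
    rw [← hres]
    refine lt_of_le_of_lt (measure_mono (singleton_subset_iff.mpr (by norm_num : (0:ℝ) ∈ Icc (0:ℝ) 1))) ?_
    exact Icc_fin (exp_int (hKfin 1 one_pos)) 1
  have hlow : ∀ t : ℝ, 0 < t → (μ {0}).toReal ≤ K t := by
    intro t ht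
    rw [hK t ht]
    have h1 : ∫ x in ({0} : Set ℝ), Real.exp (-(t ^ 2 * x)) ∂μ = (μ {0}).toReal := by
      rw [setIntegral_congr_fun (measurableSet_singleton 0)
        (g := fun _ => (1:ℝ)) (by intro x hx; rw [mem_singleton_iff] at hx; simp [hx])]
      rw [setIntegral_const, smul_eq_mul, mul_one]
      rfl
    rw [← h1]
    refine setIntegral_mono_set (hKfin t ht) (ae_of_all _ fun x => (exp_pos _).le)
      (HasSubset.Subset.eventuallyLE hsub)
  have hle : (μ {0}).toReal ≤ 0 := by
    refine ge_of_tendsto hK0 ?_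
    filter_upwards [Ioi_mem_atTop (0:ℝ)] with t ht
    exact hlow t ht
  have : (μ {0}).toReal = 0 := le_antisymm hle ENNReal.toReal_nonneg
  rcases (ENNReal.toReal_eq_zero_iff _).1 this with h | h
  · exact h
  · exact absurd h hfin.ne

lemma sqrt_integrable {K : ℝ → ℝ}
    (hKfin : ∀ t > 0, IntegrableOn (fun x => Real.exp (-(t ^ 2 * x))) (Ici 0) μ)
    (hK : ∀ t > 0, K t = ∫ x in Ici (0:ℝ), Real.exp (-(t ^ 2 * x)) ∂μ)
    (hKint : IntegrableOn K (Ioo 0 1)) :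
    IntegrableOn (fun x : ℝ => 1 / Real.sqrt x) (Ici 1) μ := by
  haveI : SigmaFinite (μ.restrict (Ici 0)) := sigmaFinite_restrict (exp_int (hKfin 1 one_pos))
  set ν := μ.restrict (Ici 0) with hν
  have hmeas : Measurable fun p : ℝ × ℝ => ENNReal.ofReal (Real.exp (-(p.1 ^ 2 * p.2))) :=
    ENNReal.measurable_ofReal.comp (by fun_prop)
  have h1 : (∫⁻ t in Ioo (0:ℝ) 1, ∫⁻ x, ENNReal.ofReal (Real.exp (-(t ^ 2 * x))) ∂ν) < ⊤ := by
    have heq : ∀ t ∈ Ioo (0:ℝ) 1,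
        (∫⁻ x, ENNReal.ofReal (Real.exp (-(t ^ 2 * x))) ∂ν) = ENNReal.ofReal (K t) := by
      intro t ht
      rw [← ofReal_integral_eq_lintegral_ofReal (hKfin t ht.1)
        (ae_of_all _ fun x => (exp_pos _).le), ← hK t ht.1]
    rw [setLIntegral_congr_fun_ae measurableSet_Ioo (ae_of_all _ heq)]
    exact hKint.lintegral_lt_top
  have h2 : (∫⁻ x, ∫⁻ t in Ioo (0:ℝ) 1, ENNReal.ofReal (Real.exp (-(t ^ 2 * x))) ∂volume ∂ν) < ⊤ := by
    have hswap := lintegral_lintegral_swap (μ := volume.restrict (Ioo (0:ℝ) 1)) (ν := ν)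
      (f := fun t x => ENNReal.ofReal (Real.exp (-(t ^ 2 * x)))) hmeas.aemeasurable
    rw [hswap] at h1
    exact h1
  have h3 : ∀ x : ℝ, 1 ≤ x → ENNReal.ofReal (Real.exp (-1) * (1 / Real.sqrt x))
      ≤ ∫⁻ t in Ioo (0:ℝ) 1, ENNReal.ofReal (Real.exp (-(t ^ 2 * x))) ∂volume := by
    intro x hx
    have hx0 : (0:ℝ) < x := lt_of_lt_of_le one_pos hx
    have hsx : 0 < Real.sqrt x := Real.sqrt_pos.mpr hx0
    have hsx1 : 1 ≤ Real.sqrt x := by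
      rw [show (1:ℝ) = Real.sqrt 1 by rw [Real.sqrt_one]]
      exact Real.sqrt_le_sqrt hx
    have hsub : Ioo (0:ℝ) (1 / Real.sqrt x) ⊆ Ioo 0 1 := by
      intro t ht
      exact ⟨ht.1, lt_of_lt_of_le ht.2 (by
        rw [div_le_one hsx]; exact hsx1)⟩
    calc ENNReal.ofReal (Real.exp (-1) * (1 / Real.sqrt x))
        = ENNReal.ofReal (Real.exp (-1)) * volume (Ioo (0:ℝ) (1 / Real.sqrt x)) := by
          rw [Real.volume_Ioo, sub_zero, ENNReal.ofReal_mul (Real.exp_pos _).le]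
      _ = ∫⁻ _ in Ioo (0:ℝ) (1 / Real.sqrt x), ENNReal.ofReal (Real.exp (-1)) ∂volume := by
          rw [setLIntegral_const]
      _ ≤ ∫⁻ t in Ioo (0:ℝ) (1 / Real.sqrt x), ENNReal.ofReal (Real.exp (-(t ^ 2 * x))) ∂volume := by
          refine setLIntegral_mono (ENNReal.measurable_ofReal.comp
            (by fun_prop : Measurable fun t : ℝ => Real.exp (-(t ^ 2 * x)))) fun t ht => ?_
          refine ENNReal.ofReal_le_ofReal (Real.exp_le_exp.2 ?_)
          have h4 : t * Real.sqrt x ≤ 1 := (le_div_iff₀ hsx).mp ht.2.le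
          have h5 : t ^ 2 * x = (t * Real.sqrt x) ^ 2 := by
            rw [mul_pow, Real.sq_sqrt hx0.le]
          have h6 : (t * Real.sqrt x) ^ 2 ≤ 1 := by
            nlinarith [mul_nonneg ht.1.le hsx.le]
          linarith
      _ ≤ ∫⁻ t in Ioo (0:ℝ) 1, ENNReal.ofReal (Real.exp (-(t ^ 2 * x))) ∂volume :=
          lintegral_mono' (Measure.restrict_mono hsub le_rfl) le_rfl
  have h5 : (∫⁻ x in Ici (1:ℝ), ENNReal.ofReal (Real.exp (-1) * (1 / Real.sqrt x)) ∂μ) < ⊤ := by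
    have hsub19 : Ici (1:ℝ) ⊆ Ici 0 := fun x hx => mem_Ici.mpr (le_trans zero_le_one (mem_Ici.mp hx))
    have hres : ν.restrict (Ici 1) = μ.restrict (Ici 1) := by
      rw [hν, Measure.restrict_restrict measurableSet_Ici, inter_eq_left.mpr hsub19]
    calc (∫⁻ x in Ici (1:ℝ), ENNReal.ofReal (Real.exp (-1) * (1 / Real.sqrt x)) ∂μ)
        = ∫⁻ x in Ici (1:ℝ), ENNReal.ofReal (Real.exp (-1) * (1 / Real.sqrt x)) ∂ν := by
          rw [← hres]
      _ ≤ ∫⁻ x in Ici (1:ℝ), (∫⁻ t in Ioo (0:ℝ) 1, ENNReal.ofReal (Real.exp (-(t ^ 2 * x))) ∂volume) ∂ν := by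
          refine lintegral_mono_ae ?_
          filter_upwards [ae_restrict_mem measurableSet_Ici] with x hx
          exact h3 x hx
      _ ≤ ∫⁻ x, (∫⁻ t in Ioo (0:ℝ) 1, ENNReal.ofReal (Real.exp (-(t ^ 2 * x))) ∂volume) ∂ν :=
          setLIntegral_le_lintegral _ _
      _ < ⊤ := h2
  have hmeas2 : Measurable fun x : ℝ => 1 / Real.sqrt x :=
    measurable_const.div Real.continuous_sqrt.measurable
  refine ⟨(hmeas2.aestronglyMeasurable), ?_⟩
  rw [hasFiniteIntegral_iff_ofReal (ae_of_all _ fun x => by positivity)]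
  have h6 : (∫⁻ x in Ici (1:ℝ), ENNReal.ofReal (1 / Real.sqrt x) ∂μ)
      = ∫⁻ x in Ici (1:ℝ), ENNReal.ofReal (Real.exp 1) * ENNReal.ofReal (Real.exp (-1) * (1 / Real.sqrt x)) ∂μ := by
    refine lintegral_congr fun x => ?_
    rw [← ENNReal.ofReal_mul (Real.exp_pos _).le, ← mul_assoc, ← Real.exp_add]
    norm_num
  rw [h6, lintegral_const_mul _ (by
    exact ENNReal.measurable_ofReal.comp ((measurable_const.mul hmeas2)))]
  exact ENNReal.mul_lt_top ENNReal.ofReal_lt_top h5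

end GKFT

namespace GKFT
open Real

lemma core {μ : Measure ℝ} {K : ℝ → ℝ}
    (hKfin : ∀ t > 0, IntegrableOn (fun x => Real.exp (-(t ^ 2 * x))) (Ici 0) μ)
    (hK : ∀ t > 0, K t = ∫ x in Ici (0:ℝ), Real.exp (-(t ^ 2 * x)) ∂μ)
    (hKint : IntegrableOn K (Ioo 0 1))
    (hKanti : AntitoneOn K (Ioi 0))
    (hμ0 : μ {0} = 0)
    (hsqrt : IntegrableOn (fun x : ℝ => 1 / Real.sqrt x) (Ici 1) μ)
    {g : ℝ → ℝ} (hgc : Continuous g) (hgb : ∀ t, |g t| ≤ 1)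
    {B : ℝ} (hB : 0 < B)
    (hbnd : ∀ {x A : ℝ}, 0 < x → 0 ≤ A →
      |∫ t in (0:ℝ)..A, Real.exp (-(t ^ 2 * x)) * g t| ≤ B)
    {f : ℝ → ℝ} (hfm : Measurable f)
    (hf : ∀ x : ℝ, 0 < x → (∫ t in Ioi (0:ℝ), Real.exp (-(t ^ 2 * x)) * g t) = f x) :
    IntegrableOn f (Ici 0) μ ∧
    Tendsto (fun A => ∫ t in (0:ℝ)..A, K t * g t) atTop
      (nhds (∫ x in Ici (0:ℝ), f x ∂μ)) := by
  haveI : SigmaFinite (μ.restrict (Ici 0)) := sigmaFinite_restrict (exp_int (hKfin 1 one_pos))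
  -- the ae-positivity of x
  have hae : ∀ᵐ x ∂(μ.restrict (Ici 0)), 0 < x := by
    have h1 : ∀ᵐ x ∂(μ.restrict (Ici 0)), x ∈ Ici (0:ℝ) := ae_restrict_mem measurableSet_Ici
    have h2 : ∀ᵐ x ∂(μ.restrict (Ici 0)), x ≠ 0 := by
      refine ae_iff.2 ?_
      have : {x : ℝ | ¬x ≠ 0} = {0} := by ext x; simp
      rw [this, Measure.restrict_apply (measurableSet_singleton 0)]
      exact measure_mono_null inter_subset_left hμ0
    filter_upwards [h1, h2] with x hx hx'
    exact lt_of_le_of_ne hx (Ne.symm hx')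
  -- bound function
  set gb : ℝ → ℝ := fun x => min B (Real.sqrt Real.pi / (2 * Real.sqrt x)) with hgbdef
  have hgbnonneg : ∀ x, 0 ≤ gb x := by
    intro x
    refine le_min hB.le ?_
    positivity
  have hgbmeas : Measurable gb :=
    measurable_const.min (measurable_const.div
      ((Real.continuous_sqrt.measurable).const_mul 2))
  have hgbint : IntegrableOn gb (Ici 0) μ := by
    have hsplit : Ici (0:ℝ) ⊆ Icc 0 1 ∪ Ici 1 := by
      intro x hx
      rcases le_or_gt x 1 with h | h
      · exact Or.inl ⟨hx, h⟩
      · exact Or.inr h.le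
    refine (IntegrableOn.union ?_ ?_).mono_set hsplit
    · have hfin : μ (Icc 0 1) < ⊤ := by
        have := Icc_fin (exp_int (hKfin 1 one_pos)) 1
        rwa [Measure.restrict_apply measurableSet_Icc,
          inter_eq_left.mpr (fun x hx => hx.1)] at this
      refine Integrable.mono' (integrableOn_const (C := B) hfin.ne)
        hgbmeas.aestronglyMeasurable ?_
      refine ae_of_all _ fun x => ?_
      rw [Real.norm_eq_abs, abs_of_nonneg (hgbnonneg x)]
      exact min_le_left _ _
    · refine Integrable.mono' (hsqrt.const_mul (Real.sqrt Real.pi / 2))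
        hgbmeas.aestronglyMeasurable ?_
      refine ae_of_all _ fun x => ?_
      rw [Real.norm_eq_abs, abs_of_nonneg (hgbnonneg x)]
      refine le_trans (min_le_right _ _) ?_
      have heq : Real.sqrt Real.pi / 2 * (1 / Real.sqrt x)
          = Real.sqrt Real.pi / (2 * Real.sqrt x) := by
        rw [mul_one_div, div_div]
      exact le_of_eq heq.symm
  -- pointwise convergence
  have hlim : ∀ x : ℝ, 0 < x →
      Tendsto (fun A : ℝ => ∫ t in (0:ℝ)..A, Real.exp (-(t ^ 2 * x)) * g t) atTop
        (nhds (f x)) := by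
    intro x hx
    have hint := int_gauss_x_mul hx hgc hgb
    have := intervalIntegral_tendsto_integral_Ioi 0 hint tendsto_id
    rwa [hf x hx] at this
  -- bound for all A ≥ 0, x > 0
  have hFb : ∀ (A x : ℝ), 0 ≤ A → 0 < x →
      ‖∫ t in (0:ℝ)..A, Real.exp (-(t ^ 2 * x)) * g t‖ ≤ gb x := by
    intro A x hA hx
    rw [Real.norm_eq_abs]
    exact le_min (hbnd hx hA) (gauss_bound hx hA hgc hgb)
  -- integrability of f
  have hfb : ∀ᵐ x ∂(μ.restrict (Ici 0)), ‖f x‖ ≤ gb x := by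
    filter_upwards [hae] with x hx
    have h1 : Tendsto (fun n : ℕ => ∫ t in (0:ℝ)..(n:ℝ), Real.exp (-(t ^ 2 * x)) * g t) atTop
        (nhds (f x)) := (hlim x hx).comp tendsto_natCast_atTop_atTop
    refine le_of_tendsto h1.norm ?_
    exact Eventually.of_forall fun n => hFb n x (Nat.cast_nonneg n) hx
  have hfint : IntegrableOn f (Ici 0) μ :=
    Integrable.mono' hgbint hfm.aestronglyMeasurable hfb
  refine ⟨hfint, ?_⟩
  -- the Fubini identity for A ≥ 1
  have hiden : ∀ A : ℝ, 1 ≤ A → (∫ t in (0:ℝ)..A, K t * g t)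
      = ∫ x in Ici (0:ℝ), (∫ t in (0:ℝ)..A, Real.exp (-(t ^ 2 * x)) * g t) ∂μ := by
    intro A hA
    have hA0 : (0:ℝ) ≤ A := le_trans zero_le_one hA
    -- integrability of K on Ioc 0 A
    have hKnn : ∀ t : ℝ, 0 < t → 0 ≤ K t := by
      intro t ht
      rw [hK t ht]
      exact integral_nonneg fun x => (exp_pos _).le
    have hKbd : IntegrableOn K (Ioc 0 A) := by
      have h2 : IntegrableOn K (Icc 1 A) := by
        have hg0m : StronglyMeasurable fun t : ℝ => ∫ x, Real.exp (-(t ^ 2 * x)) ∂(μ.restrict (Ici 0)) :=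
          StronglyMeasurable.integral_prod_right
            ((by fun_prop : Continuous fun p : ℝ × ℝ => Real.exp (-(p.1 ^ 2 * p.2))).stronglyMeasurable)
        refine Integrable.mono' (integrableOn_const (C := K 1)
          measure_Icc_lt_top.ne) ?_ ?_
        · refine hg0m.aestronglyMeasurable.congr ?_
          filter_upwards [ae_restrict_mem measurableSet_Icc] with t ht
          exact (hK t (lt_of_lt_of_le one_pos ht.1)).symm
        · filter_upwards [ae_restrict_mem measurableSet_Icc] with t ht
          rw [Real.norm_eq_abs, abs_of_nonneg (hKnn t (lt_of_lt_of_le one_pos ht.1))]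
          exact hKanti (mem_Ioi.mpr one_pos) (mem_Ioi.mpr (lt_of_lt_of_le one_pos ht.1)) ht.1
      refine (hKint.union h2).mono_set ?_
      intro t ht
      rcases lt_or_ge t 1 with h | h
      · exact Or.inl ⟨ht.1, h⟩
      · exact Or.inr ⟨h, ht.2⟩
    -- product integrability
    have hmeas : AEStronglyMeasurable (Function.uncurry fun t x => Real.exp (-(t ^ 2 * x)) * g t)
        ((volume.restrict (Ioc 0 A)).prod (μ.restrict (Ici 0))) := by
      refine Continuous.aestronglyMeasurable ?_
      have : (Function.uncurry fun t x => Real.exp (-(t ^ 2 * x)) * g t)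
          = fun p : ℝ × ℝ => Real.exp (-(p.1 ^ 2 * p.2)) * g p.1 := rfl
      rw [this]
      fun_prop
    have hprod : Integrable (Function.uncurry fun t x => Real.exp (-(t ^ 2 * x)) * g t)
        ((volume.restrict (Ioc 0 A)).prod (μ.restrict (Ici 0))) := by
      rw [integrable_prod_iff hmeas]
      constructor
      · filter_upwards [ae_restrict_mem measurableSet_Ioc] with t ht
        exact (hKfin t ht.1).mul_const (g t)
      · refine Integrable.mono' hKbd (hmeas.norm.integral_prod_right') ?_
        filter_upwards [ae_restrict_mem measurableSet_Ioc] with t ht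
        have h0 : ∀ x : ℝ, ‖Real.exp (-(t ^ 2 * x)) * g t‖ ≤ Real.exp (-(t ^ 2 * x)) := by
          intro x
          rw [norm_mul, Real.norm_eq_abs, Real.norm_eq_abs, abs_exp]
          exact mul_le_of_le_one_right (exp_pos _).le (hgb t)
        have h1 : (∫ x, ‖Real.exp (-(t ^ 2 * x)) * g t‖ ∂(μ.restrict (Ici 0)))
            ≤ ∫ x, Real.exp (-(t ^ 2 * x)) ∂(μ.restrict (Ici 0)) := by
          refine integral_mono (((hKfin t ht.1).mul_const (g t)).norm) (hKfin t ht.1) h0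
        rw [Real.norm_eq_abs, abs_of_nonneg (integral_nonneg fun x => norm_nonneg _)]
        rw [hK t ht.1]
        exact h1
    have hswap := integral_integral_swap (f := fun t x => Real.exp (-(t ^ 2 * x)) * g t) hprod
    calc ∫ t in (0:ℝ)..A, K t * g t
        = ∫ t in Ioc (0:ℝ) A, K t * g t := intervalIntegral.integral_of_le hA0
      _ = ∫ t in Ioc (0:ℝ) A, (∫ x, Real.exp (-(t ^ 2 * x)) ∂(μ.restrict (Ici 0))) * g t := by
          refine setIntegral_congr_fun measurableSet_Ioc fun t ht => ?_
          rw [← hK t ht.1]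
      _ = ∫ t in Ioc (0:ℝ) A, ∫ x, Real.exp (-(t ^ 2 * x)) * g t ∂(μ.restrict (Ici 0)) := by
          refine setIntegral_congr_fun measurableSet_Ioc fun t ht => ?_
          rw [integral_mul_const]
      _ = ∫ x in Ici (0:ℝ), (∫ t in Ioc (0:ℝ) A, Real.exp (-(t ^ 2 * x)) * g t) ∂μ := hswap
      _ = ∫ x in Ici (0:ℝ), (∫ t in (0:ℝ)..A, Real.exp (-(t ^ 2 * x)) * g t) ∂μ := by
          refine integral_congr_ae (ae_of_all _ fun x => ?_)
          simp only
          exact (intervalIntegral.integral_of_le hA0).symm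
    -- DCT
  have hdct : Tendsto (fun A : ℝ => ∫ x in Ici (0:ℝ),
      (∫ t in (0:ℝ)..A, Real.exp (-(t ^ 2 * x)) * g t) ∂μ) atTop
      (nhds (∫ x in Ici (0:ℝ), f x ∂μ)) := by
    refine tendsto_integral_filter_of_dominated_convergence gb ?_ ?_ hgbint ?_
    · filter_upwards [Ici_mem_atTop (0:ℝ)] with A hA
      have heq : (fun x => ∫ t in (0:ℝ)..A, Real.exp (-(t ^ 2 * x)) * g t)
          = fun x => ∫ t in Ioc (0:ℝ) A, Real.exp (-(t ^ 2 * x)) * g t := by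
        funext x
        exact intervalIntegral.integral_of_le hA
      rw [heq]
      have hsm : StronglyMeasurable
          (Function.uncurry fun t x : ℝ => Real.exp (-(t ^ 2 * x)) * g t) := by
        have : (Function.uncurry fun t x : ℝ => Real.exp (-(t ^ 2 * x)) * g t)
            = fun p : ℝ × ℝ => Real.exp (-(p.1 ^ 2 * p.2)) * g p.1 := rfl
        rw [this]
        exact (by fun_prop : Continuous fun p : ℝ × ℝ =>
          Real.exp (-(p.1 ^ 2 * p.2)) * g p.1).stronglyMeasurable
      exact (StronglyMeasurable.integral_prod_left
        (μ := volume.restrict (Ioc 0 A)) hsm).aestronglyMeasurable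
    · filter_upwards [Ici_mem_atTop (0:ℝ)] with A hA
      filter_upwards [hae] with x hx
      exact hFb A x hA hx
    · filter_upwards [hae] with x hx
      exact hlim x hx
  refine hdct.congr' ?_
  filter_upwards [Ici_mem_atTop (1:ℝ)] with A hA
  exact (hiden A hA).symm

end GKFT

/-- Fourier cosine and sine transforms of a kernel
`K(t) = φ(t²) = ∫₀^∞ e^{−t²x} μ(dx)` with `φ` completely monotonic:
`μ({0}) = 0`, `∫₁^∞ x^{−1/2} μ(dx) < ∞`, and for every `ω ≠ 0`,
`𝒦cos(ω) = (√π/2)∫₀^∞ x^{−1/2} e^{−ω²/(4x)} μ(dx)` and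
`𝒦sin(ω) = ∫₀^∞ x^{−1/2} daw(ω/(2√x)) μ(dx)` as convergent improper
integrals. -/
theorem gaussian_type_kernel_fourier_transforms
    (μ : Measure ℝ) (K : ℝ → ℝ)
    (hKfin : ∀ t > 0, IntegrableOn (fun x => Real.exp (-(t ^ 2 * x))) (Ici 0) μ)
    (hK : ∀ t > 0, K t = ∫ x in Ici (0:ℝ), Real.exp (-(t ^ 2 * x)) ∂μ)
    (hKint : IntegrableOn K (Ioo 0 1))
    (hKanti : AntitoneOn K (Ioi 0))
    (hK0 : Tendsto K atTop (nhds 0)) :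
    μ {0} = 0 ∧
    IntegrableOn (fun x : ℝ => 1 / Real.sqrt x) (Ici 1) μ ∧
    ∀ ω : ℝ, ω ≠ 0 →
      IntegrableOn (fun x => (1 / Real.sqrt x) * Real.exp (-(ω ^ 2 / (4 * x)))) (Ici 0) μ ∧
      IntegrableOn (fun x => (1 / Real.sqrt x) * daw (ω / (2 * Real.sqrt x))) (Ici 0) μ ∧
      Tendsto (fun A => ∫ t in (0:ℝ)..A, K t * Real.cos (ω * t)) atTop
        (nhds (Real.sqrt Real.pi / 2 *
          ∫ x in Ici (0:ℝ), (1 / Real.sqrt x) * Real.exp (-(ω ^ 2 / (4 * x))) ∂μ)) ∧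
      Tendsto (fun A => ∫ t in (0:ℝ)..A, K t * Real.sin (ω * t)) atTop
        (nhds (∫ x in Ici (0:ℝ), (1 / Real.sqrt x) * daw (ω / (2 * Real.sqrt x)) ∂μ)) := by
  have hμ0 : μ {0} = 0 := GKFT.measure_zero_singleton hKfin hK hK0
  have hsqrt := GKFT.sqrt_integrable hKfin hK hKint
  refine ⟨hμ0, hsqrt, ?_⟩
  intro ω hω
  have hωa : 0 < |ω| := abs_pos.mpr hω
  have hB : 0 < 3 / |ω| := by positivity
  have hπ : (0:ℝ) < Real.sqrt Real.pi := Real.sqrt_pos.mpr Real.pi_pos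
  have hmeas_cos : Measurable fun x : ℝ =>
      1 / Real.sqrt x * (Real.sqrt Real.pi / 2 * Real.exp (-(ω ^ 2 / (4 * x)))) := by
    refine (measurable_const.div Real.continuous_sqrt.measurable).mul ?_
    refine Measurable.const_mul ?_ _
    exact Real.measurable_exp.comp ((measurable_const.div
      ((measurable_id.const_mul 4))).neg)
  have hmeas_sin : Measurable fun x : ℝ =>
      1 / Real.sqrt x * daw (ω / (2 * Real.sqrt x)) := by
    refine (measurable_const.div Real.continuous_sqrt.measurable).mul ?_
    exact GKFT.daw_continuous.measurable.comp
      (measurable_const.div ((Real.continuous_sqrt.measurable).const_mul 2))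
  have hcos := GKFT.core hKfin hK hKint hKanti hμ0 hsqrt
    (g := fun t => Real.cos (ω * t)) (by fun_prop) (fun t => Real.abs_cos_le_one _)
    hB (fun {x A} hx hA => GKFT.cos_bound hx hω hA)
    hmeas_cos (fun x hx => GKFT.cos_formula ω hx)
  have hsin := GKFT.core hKfin hK hKint hKanti hμ0 hsqrt
    (g := fun t => Real.sin (ω * t)) (by fun_prop) (fun t => Real.abs_sin_le_one _)
    hB (fun {x A} hx hA => GKFT.sin_bound hx hω hA)
    hmeas_sin (fun x hx => GKFT.sin_formula ω hx)
  have hcosInt : IntegrableOn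
      (fun x => (1 / Real.sqrt x) * Real.exp (-(ω ^ 2 / (4 * x)))) (Ici 0) μ := by
    have h1 := hcos.1
    have h2 := h1.const_mul (2 / Real.sqrt Real.pi)
    refine h2.congr (ae_of_all _ fun x => ?_)
    have hne : Real.sqrt Real.pi ≠ 0 := hπ.ne'
    simp only
    rw [show (2 / Real.sqrt Real.pi)
        * (1 / Real.sqrt x * (Real.sqrt Real.pi / 2 * Real.exp (-(ω ^ 2 / (4 * x)))))
        = (Real.sqrt Real.pi * (Real.sqrt Real.pi)⁻¹)
          * (1 / Real.sqrt x * Real.exp (-(ω ^ 2 / (4 * x)))) from by ring,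
      mul_inv_cancel₀ hne, one_mul]
  have hval : (∫ x in Ici (0:ℝ),
        1 / Real.sqrt x * (Real.sqrt Real.pi / 2 * Real.exp (-(ω ^ 2 / (4 * x)))) ∂μ)
      = Real.sqrt Real.pi / 2
        * ∫ x in Ici (0:ℝ), 1 / Real.sqrt x * Real.exp (-(ω ^ 2 / (4 * x))) ∂μ := by
    rw [← integral_const_mul]
    exact integral_congr_ae (ae_of_all _ fun x => by ring)
  refine ⟨hcosInt, hsin.1, ?_, hsin.2⟩
  have := hcos.2
  rwa [hval] at this
end

section
/- Let w : ℂ → ℂ be the Faddeeva function w(z) = e^{−z²}·erfc(−iz), which satisfies the closed form w(z) = e^{−z²} + (2iz/√π)·e^{−z²}·∫₀¹ e^{s²z²} ds. Then there exist constants C > 0 and R > 0 such that for every z ∈ ℂ with |z| ≥ R that can be written z = |z|·e^{iθ} with −π/8 < θ < 9π/8, one has |w(z)| ≤ C/|z|. -/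
open MeasureTheory Filter Set

lemma norm_exp_shift (z : ℂ) (u : ℝ) :
    ‖Complex.exp (-((u:ℂ) - Complex.I*z)^2)‖ = Real.exp (z.re^2 - (u + z.im)^2) := by
  rw [Complex.norm_exp]
  congr 1
  simp [Complex.sub_re, Complex.sub_im, Complex.mul_re, Complex.mul_im, pow_two]

lemma int_shift_gauss (c : ℝ) : IntegrableOn (fun u : ℝ => Real.exp (-(u - c)^2)) (Ioi 0) := by
  have h : Integrable (fun u : ℝ => Real.exp (-(u - c)^2)) := by
    have := (integrable_exp_neg_mul_sq (b := 1) one_pos).comp_sub_right c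
    simpa using this
  exact h.integrableOn

lemma cont_exp_shift (x : ℂ) : Continuous (fun u : ℝ => Complex.exp (-((u:ℂ) - Complex.I*x)^2)) := by
  fun_prop

lemma integrableOn_exp_shift (x : ℂ) :
    IntegrableOn (fun u : ℝ => Complex.exp (-((u:ℂ) - Complex.I*x)^2)) (Ioi 0) := by
  apply Integrable.mono' ((int_shift_gauss (-x.im)).const_mul (Real.exp (x.re^2)))
    ((cont_exp_shift x).aestronglyMeasurable)
  filter_upwards with u
  rw [norm_exp_shift, sub_eq_add_neg, Real.exp_add, sub_neg_eq_add]

lemma hasDerivAt_inner (x : ℂ) (u : ℝ) :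
    HasDerivAt (fun x : ℂ => Complex.exp (-((u:ℂ) - Complex.I*x)^2))
      (2*Complex.I*((u:ℂ) - Complex.I*x) * Complex.exp (-((u:ℂ) - Complex.I*x)^2)) x := by
  have h1 : HasDerivAt (fun x : ℂ => (u:ℂ) - Complex.I*x) (-Complex.I) x := by
    simpa using ((hasDerivAt_id x).const_mul Complex.I).const_sub (u:ℂ)
  have h2 := ((h1.fun_pow 2).fun_neg).cexp
  refine h2.congr_deriv ?_
  ring

lemma hasDerivAt_G (z₀ : ℂ) :
    HasDerivAt (fun z : ℂ => ∫ u in Ioi (0:ℝ), Complex.exp (-((u:ℂ) - Complex.I*z)^2))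
      (∫ u in Ioi (0:ℝ), 2*Complex.I*((u:ℂ) - Complex.I*z₀) * Complex.exp (-((u:ℂ) - Complex.I*z₀)^2)) z₀ ∧
    IntegrableOn (fun u : ℝ => 2*Complex.I*((u:ℂ) - Complex.I*z₀) * Complex.exp (-((u:ℂ) - Complex.I*z₀)^2)) (Ioi (0:ℝ)) := by
  set M : ℝ := ‖z₀‖ + 1 with hM
  have hM1 : 1 ≤ M := by simp only [hM]; linarith [norm_nonneg z₀]
  have h := hasDerivAt_integral_of_dominated_loc_of_deriv_le (μ := volume.restrict (Ioi (0:ℝ)))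
    (x₀ := z₀)
    (F := fun z u => Complex.exp (-((u:ℂ) - Complex.I*z)^2))
    (F' := fun z u => 2*Complex.I*((u:ℂ) - Complex.I*z) * Complex.exp (-((u:ℂ) - Complex.I*z)^2))
    (bound := fun u => 2 * Real.exp (M^2 + M) * Real.exp (((2*M+1)/2)^2) * Real.exp (-(u - (2*M+1)/2)^2))
    (s := Metric.ball z₀ 1) (Metric.ball_mem_nhds z₀ one_pos) ?_ ?_ ?_ ?_ ?_ ?_
  · exact ⟨h.2, h.1⟩
  · filter_upwards with x
    exact ((cont_exp_shift x).aestronglyMeasurable)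
  · exact integrableOn_exp_shift z₀
  · apply Continuous.aestronglyMeasurable
    fun_prop
  · rw [ae_restrict_iff' measurableSet_Ioi]
    filter_upwards with u hu
    intro x hx
    have hxM : ‖x‖ ≤ M := by
      have := mem_ball_iff_norm.mp hx
      have h2 : ‖x - z₀‖ < 1 := this
      calc ‖x‖ = ‖z₀ + (x - z₀)‖ := by ring_nf
        _ ≤ ‖z₀‖ + ‖x - z₀‖ := norm_add_le _ _
        _ ≤ ‖z₀‖ + 1 := by linarith
    have hu0 : (0:ℝ) ≤ u := le_of_lt hu
    have hre : |x.re| ≤ M := le_trans (Complex.abs_re_le_norm x) hxM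
    have him : |x.im| ≤ M := le_trans (Complex.abs_im_le_norm x) hxM
    rw [norm_mul, norm_exp_shift]
    have hb1 : ‖2*Complex.I*((u:ℂ) - Complex.I*x)‖ ≤ 2 * (u + M) := by
      rw [norm_mul]
      have : ‖2*Complex.I‖ = 2 := by simp
      rw [this]
      have : ‖(u:ℂ) - Complex.I*x‖ ≤ u + M := by
        calc ‖(u:ℂ) - Complex.I*x‖ ≤ ‖(u:ℂ)‖ + ‖Complex.I*x‖ :=
          norm_sub_le _ _
        _ = |u| + ‖x‖ := by simp
        _ ≤ u + M := by rw [_root_.abs_of_nonneg hu0]; linarith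
      linarith [this]
    have hb2 : Real.exp (x.re^2 - (u + x.im)^2) ≤ Real.exp (M^2 + 2*M*u - u^2) := by
      apply Real.exp_le_exp.mpr
      have h1 : x.re^2 ≤ M^2 := by nlinarith [abs_nonneg x.re, _root_.sq_abs x.re]
      have h2 : u^2 - 2*M*u ≤ (u + x.im)^2 := by nlinarith [(abs_le.mp him).1, (abs_le.mp him).2, sq_nonneg x.im, hu0]
      nlinarith
    calc ‖2*Complex.I*((u:ℂ) - Complex.I*x)‖ * Real.exp (x.re^2 - (u + x.im)^2)
        ≤ (2 * (u + M)) * Real.exp (M^2 + 2*M*u - u^2) := by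
          apply mul_le_mul hb1 hb2 (Real.exp_nonneg _) (by positivity)
      _ ≤ 2 * Real.exp (u + M) * Real.exp (M^2 + 2*M*u - u^2) := by
          have hum : u + M ≤ Real.exp (u + M) := by linarith [Real.add_one_le_exp (u+M)]
          gcongr
      _ = 2 * Real.exp (M^2 + M) * Real.exp (((2*M+1)/2)^2) * Real.exp (-(u - (2*M+1)/2)^2) := by
          have e1 : Real.exp (u + M) * Real.exp (M^2 + 2*M*u - u^2) =
              Real.exp (M^2 + M) * (Real.exp (((2*M+1)/2)^2) * Real.exp (-(u - (2*M+1)/2)^2)) := by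
            rw [← Real.exp_add, ← Real.exp_add, ← Real.exp_add]
            congr 1
            ring
          rw [mul_assoc, e1]
          ring
  · exact (int_shift_gauss ((2*M+1)/2)).const_mul _
  · rw [ae_restrict_iff' measurableSet_Ioi]
    filter_upwards with u hu
    intro x hx
    exact hasDerivAt_inner x u

lemma tendsto_exp_shift_zero (z : ℂ) :
    Tendsto (fun u : ℝ => -Complex.I * Complex.exp (-((u:ℂ) - Complex.I*z)^2)) atTop (nhds 0) := by
  rw [tendsto_zero_iff_norm_tendsto_zero]
  have h1 : Tendsto (fun u : ℝ => (u + z.im)^2) atTop atTop :=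
    (tendsto_pow_atTop two_ne_zero).comp (tendsto_atTop_add_const_right atTop z.im tendsto_id)
  have h2 : Tendsto (fun u : ℝ => z.re^2 - (u + z.im)^2) atTop atBot := by
    apply tendsto_atBot_add_const_left atTop (z.re^2) ((tendsto_neg_atTop_atBot).comp h1)
  have h3 : Tendsto (fun u : ℝ => Real.exp (z.re^2 - (u + z.im)^2)) atTop (nhds 0) :=
    Real.tendsto_exp_atBot.comp h2
  apply h3.congr
  intro u
  rw [norm_mul, norm_exp_shift]
  simp

lemma integral_F'_eq (z : ℂ) :
    ∫ u in Ioi (0:ℝ), 2*Complex.I*((u:ℂ) - Complex.I*z) * Complex.exp (-((u:ℂ) - Complex.I*z)^2)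
      = Complex.I * Complex.exp (z^2) := by
  have hderiv : ∀ u ∈ Ici (0:ℝ), HasDerivAt
      (fun u : ℝ => -Complex.I * Complex.exp (-((u:ℂ) - Complex.I*z)^2))
      (2*Complex.I*((u:ℂ) - Complex.I*z) * Complex.exp (-((u:ℂ) - Complex.I*z)^2)) u := by
    intro u _
    have h1 : HasDerivAt (fun c : ℂ => c - Complex.I*z) 1 (u:ℂ) := (hasDerivAt_id _).sub_const _
    have h2 := ((((h1.fun_pow 2).fun_neg).cexp).const_mul (-Complex.I)).comp_ofReal
    convert h2 using 1
    ring
  have := integral_Ioi_of_hasDerivAt_of_tendsto' hderiv (hasDerivAt_G z).2 (tendsto_exp_shift_zero z)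
  rw [this]
  have : -((0:ℂ) - Complex.I*z)^2 = z^2 := by
    rw [zero_sub, neg_sq, mul_pow, Complex.I_sq]
    ring
  simp only [Complex.ofReal_zero, this]
  ring

lemma hasDerivAt_G' (z : ℂ) :
    HasDerivAt (fun z : ℂ => ∫ u in Ioi (0:ℝ), Complex.exp (-((u:ℂ) - Complex.I*z)^2))
      (Complex.I * Complex.exp (z^2)) z := by
  have := (hasDerivAt_G z).1
  rwa [integral_F'_eq] at this

lemma norm_cexp_sq (s : ℝ) (x : ℂ) :
    ‖Complex.exp ((s:ℂ)^2 * x^2)‖ = Real.exp (s^2 * (x^2).re) := by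
  rw [Complex.norm_exp]
  congr 1
  have : ((s:ℂ))^2 = ((s^2 : ℝ) : ℂ) := by push_cast; ring
  rw [this, Complex.re_ofReal_mul]

lemma hasDerivAt_J (z₀ : ℂ) :
    HasDerivAt (fun z : ℂ => ∫ s in (0:ℝ)..1, Complex.exp ((s:ℂ)^2 * z^2))
      (∫ s in (0:ℝ)..1, 2*(s:ℂ)^2*z₀*Complex.exp ((s:ℂ)^2 * z₀^2)) z₀ := by
  set M : ℝ := ‖z₀‖ + 1 with hM
  have hM0 : 0 < M := by simp only [hM]; positivity
  have h := intervalIntegral.hasDerivAt_integral_of_dominated_loc_of_deriv_le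
    (μ := volume) (a := (0:ℝ)) (b := 1) (x₀ := z₀)
    (F := fun z s => Complex.exp ((s:ℂ)^2 * z^2))
    (F' := fun z s => 2*(s:ℂ)^2*z*Complex.exp ((s:ℂ)^2 * z^2))
    (bound := fun _ => 2 * M * Real.exp (M^2))
    (s := Metric.ball z₀ 1) (Metric.ball_mem_nhds z₀ one_pos) ?_ ?_ ?_ ?_ ?_ ?_
  · exact h.2
  · filter_upwards with x
    apply Continuous.aestronglyMeasurable
    fun_prop
  · apply Continuous.intervalIntegrable
    fun_prop
  · apply Continuous.aestronglyMeasurable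
    fun_prop
  · filter_upwards with s
    intro hs x hx
    have hxM : ‖x‖ ≤ M := by
      have h2 : ‖x - z₀‖ < 1 := mem_ball_iff_norm.mp hx
      calc ‖x‖ = ‖z₀ + (x - z₀)‖ := by ring_nf
        _ ≤ ‖z₀‖ + ‖x - z₀‖ := norm_add_le _ _
        _ ≤ ‖z₀‖ + 1 := by linarith
    have hs1 : s ∈ Ioc (0:ℝ) 1 := by rwa [uIoc_of_le (by norm_num : (0:ℝ) ≤ 1)] at hs
    have hs2 : s^2 ≤ 1 := by nlinarith [hs1.1.le, hs1.2]
    have hs0 : (0:ℝ) ≤ s^2 := sq_nonneg s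
    rw [norm_mul, norm_cexp_sq]
    have hre : (x^2).re ≤ M^2 := by
      calc (x^2).re ≤ ‖x^2‖ := Complex.re_le_norm _
        _ = ‖x‖ ^ 2 := by rw [norm_pow]
        _ ≤ M^2 := by nlinarith [norm_nonneg x]
    have hb2 : Real.exp (s^2 * (x^2).re) ≤ Real.exp (M^2) := by
      apply Real.exp_le_exp.mpr
      rcases le_or_gt 0 ((x^2).re) with h | h
      · nlinarith
      · nlinarith
    have hb1 : ‖2*(s:ℂ)^2*x‖ ≤ 2 * M := by
      rw [norm_mul, norm_mul]
      have e1 : ‖(s:ℂ)^2‖ = s^2 := by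
        rw [norm_pow]
        simp [_root_.abs_of_nonneg, Complex.norm_real, _root_.sq_abs]
      have e2 : ‖(2:ℂ)‖ = 2 := by simp
      rw [e1, e2]
      calc 2 * s^2 * ‖x‖ ≤ 2 * 1 * M := by
            apply mul_le_mul _ hxM (norm_nonneg x) (by norm_num)
            nlinarith
        _ = 2 * M := by ring
    calc ‖2*(s:ℂ)^2*x‖ * Real.exp (s^2 * (x^2).re) ≤ (2*M) * Real.exp (M^2) :=
        mul_le_mul hb1 hb2 (Real.exp_nonneg _) (by positivity)
      _ = 2 * M * Real.exp (M^2) := by ring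
  · apply Continuous.intervalIntegrable
    fun_prop
  · filter_upwards with s
    intro _ x hx
    have h1 : HasDerivAt (fun z : ℂ => (s:ℂ)^2 * z^2) (2*(s:ℂ)^2*x) x := by
      have := ((hasDerivAt_id x).pow 2).const_mul ((s:ℂ)^2)
      refine this.congr_deriv ?_
      simp only [id_eq]
      ring
    have h2 := h1.cexp
    refine h2.congr_deriv ?_
    ring

lemma key_FTC (z : ℂ) :
    ∫ s in (0:ℝ)..1, (Complex.exp ((s:ℂ)^2*z^2) + 2*(s:ℂ)^2*z^2*Complex.exp ((s:ℂ)^2*z^2))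
      = Complex.exp (z^2) := by
  have hd : ∀ s ∈ uIcc (0:ℝ) 1, HasDerivAt (fun s : ℝ => (s:ℂ) * Complex.exp ((s:ℂ)^2*z^2))
      (Complex.exp ((s:ℂ)^2*z^2) + 2*(s:ℂ)^2*z^2*Complex.exp ((s:ℂ)^2*z^2)) s := by
    intro s _
    have h1 : HasDerivAt (fun c : ℂ => c * Complex.exp (c^2*z^2))
        (1 * Complex.exp (((s:ℂ))^2*z^2) + (s:ℂ) * (Complex.exp (((s:ℂ))^2*z^2) * (2*(s:ℂ)^1*1*z^2))) (s:ℂ) := by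
      exact (hasDerivAt_id _).mul (((hasDerivAt_id ((s:ℂ))).pow 2).mul_const (z^2)).cexp
    have h2 := h1.comp_ofReal
    convert h2 using 1
    ring
  have hint : IntervalIntegrable
      (fun s : ℝ => Complex.exp ((s:ℂ)^2*z^2) + 2*(s:ℂ)^2*z^2*Complex.exp ((s:ℂ)^2*z^2))
      volume 0 1 := by
    apply Continuous.intervalIntegrable
    fun_prop
  have := intervalIntegral.integral_eq_sub_of_hasDerivAt hd hint
  rw [this]
  simp

lemma hasDerivAt_A (z : ℂ) :
    HasDerivAt (fun z : ℂ => z * ∫ s in (0:ℝ)..1, Complex.exp ((s:ℂ)^2 * z^2))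
      (Complex.exp (z^2)) z := by
  have h := (hasDerivAt_id z).mul (hasDerivAt_J z)
  have e : 1 * (∫ s in (0:ℝ)..1, Complex.exp ((s:ℂ)^2 * z^2)) +
      z * ∫ s in (0:ℝ)..1, 2*(s:ℂ)^2*z*Complex.exp ((s:ℂ)^2 * z^2) = Complex.exp (z^2) := by
    rw [one_mul, ← intervalIntegral.integral_const_mul, ← intervalIntegral.integral_add]
    · rw [← key_FTC z]
      congr 1
      funext s
      ring
    · apply Continuous.intervalIntegrable; fun_prop
    · apply Continuous.intervalIntegrable; fun_prop
  simp only [id_eq] at h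
  rwa [e] at h

lemma sqrtpi_ne : ((Real.sqrt Real.pi : ℝ) : ℂ) ≠ 0 := by
  simp only [ne_eq, Complex.ofReal_eq_zero]
  positivity

lemma G_zero : (∫ u in Ioi (0:ℝ), Complex.exp (-((u:ℂ) - 0)^2))
    = ((Real.sqrt Real.pi / 2 : ℝ) : ℂ) := by
  have h : ∀ u : ℝ, Complex.exp (-((u:ℂ) - 0)^2) = ((Real.exp (-1*u^2) : ℝ) : ℂ) := by
    intro u
    rw [Complex.ofReal_exp]
    congr 1
    push_cast
    ring
  simp_rw [h]
  have h1 : (∫ u in Ioi (0:ℝ), ((Real.exp (-1*u^2) : ℝ) : ℂ))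
      = (((∫ u in Ioi (0:ℝ), Real.exp (-1*u^2)) : ℝ) : ℂ) := integral_ofReal
  rw [h1, integral_gaussian_Ioi]
  norm_num

lemma key_identity (z : ℂ) :
    Complex.exp (-z^2) + (2*Complex.I*z/(Real.sqrt Real.pi : ℂ)) * Complex.exp (-z^2) *
      (∫ s in (0:ℝ)..1, Complex.exp ((s:ℂ)^2*z^2))
    = (2/(Real.sqrt Real.pi : ℂ)) *
        ∫ u in Ioi (0:ℝ), Complex.exp (-z^2) * Complex.exp (-((u:ℂ) - Complex.I*z)^2) := by
  set c : ℂ := ((Real.sqrt Real.pi : ℝ) : ℂ) with hc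
  have hd : ∀ x : ℂ, HasDerivAt (fun z : ℂ =>
      (1 + (2*Complex.I/c) * (z * ∫ s in (0:ℝ)..1, Complex.exp ((s:ℂ)^2*z^2))) -
        (2/c) * ∫ u in Ioi (0:ℝ), Complex.exp (-((u:ℂ) - Complex.I*z)^2)) 0 x := by
    intro x
    have h1 := ((hasDerivAt_A x).const_mul (2*Complex.I/c)).const_add 1
    have h2 := (hasDerivAt_G' x).const_mul (2/c)
    have h3 := h1.fun_sub h2
    refine h3.congr_deriv ?_
    ring
  have hconst := is_const_of_deriv_eq_zero (𝕜 := ℂ)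
    (fun x => (hd x).differentiableAt) (fun x => (hd x).deriv) z 0
  simp only [Complex.ofReal_zero, zero_mul, mul_zero] at hconst
  rw [G_zero] at hconst
  -- hconst : (1 + (2I/c)(z J z)) - (2/c) G z = (1 + 0) - (2/c)(√π/2)
  have hc2 : ((Real.sqrt Real.pi / 2 : ℝ) : ℂ) = c / 2 := by
    rw [hc]; push_cast; ring
  rw [hc2] at hconst
  have hGz : (1 + (2*Complex.I/c) * (z * ∫ s in (0:ℝ)..1, Complex.exp ((s:ℂ)^2*z^2))) -
      (2/c) * (∫ u in Ioi (0:ℝ), Complex.exp (-((u:ℂ) - Complex.I*z)^2)) = 0 := by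
    rw [hconst]
    have hcne : c ≠ 0 := sqrtpi_ne
    field_simp
    ring
  have hpull : (∫ u in Ioi (0:ℝ), Complex.exp (-z^2) * Complex.exp (-((u:ℂ) - Complex.I*z)^2))
      = Complex.exp (-z^2) * ∫ u in Ioi (0:ℝ), Complex.exp (-((u:ℂ) - Complex.I*z)^2) := by
    rw [integral_const_mul]
  rw [hpull]
  have hexp : Complex.exp (-z^2) ≠ 0 := Complex.exp_ne_zero _
  have := sub_eq_zero.mp hGz
  -- this : 1 + (2I/c)(z J) = (2/c) G
  calc Complex.exp (-z^2) + (2*Complex.I*z/c) * Complex.exp (-z^2) *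
        (∫ s in (0:ℝ)..1, Complex.exp ((s:ℂ)^2*z^2))
      = Complex.exp (-z^2) * (1 + (2*Complex.I/c) * (z * ∫ s in (0:ℝ)..1, Complex.exp ((s:ℂ)^2*z^2))) := by
        ring
    _ = Complex.exp (-z^2) * ((2/c) * ∫ u in Ioi (0:ℝ), Complex.exp (-((u:ℂ) - Complex.I*z)^2)) := by
        rw [this]
    _ = (2/c) * (Complex.exp (-z^2) * ∫ u in Ioi (0:ℝ), Complex.exp (-((u:ℂ) - Complex.I*z)^2)) := by
        ring

lemma upper_bound {z : ℂ} (hy : 0 < z.im) :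
    ‖(2/((Real.sqrt Real.pi : ℝ):ℂ)) *
        ∫ u in Ioi (0:ℝ), Complex.exp (-z^2) * Complex.exp (-((u:ℂ) - Complex.I*z)^2)‖
      ≤ 1 / (Real.sqrt Real.pi * z.im) := by
  have hπ : 0 < Real.sqrt Real.pi := Real.sqrt_pos.mpr Real.pi_pos
  rw [norm_mul]
  have h1 : ‖2/((Real.sqrt Real.pi : ℝ):ℂ)‖ = 2 / Real.sqrt Real.pi := by
    rw [norm_div, Complex.norm_real, Real.norm_eq_abs, _root_.abs_of_nonneg hπ.le]
    norm_num
  rw [h1]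
  have hnorm : ∀ u : ℝ, u ∈ Ioi (0:ℝ) →
      ‖Complex.exp (-z^2) * Complex.exp (-((u:ℂ) - Complex.I*z)^2)‖ ≤ Real.exp (-(2*z.im)*u) := by
    intro u hu
    rw [norm_mul, Complex.norm_exp, norm_exp_shift,
      ← Real.exp_add]
    apply Real.exp_le_exp.mpr
    have : (-z^2).re = z.im^2 - z.re^2 := by
      simp [Complex.neg_re, Complex.sq_norm, Complex.mul_re, pow_two]
    rw [this]
    have hu0 : (0:ℝ) ≤ u := le_of_lt hu
    nlinarith [sq_nonneg u]
  have hintb : IntegrableOn (fun u : ℝ => Real.exp (-(2*z.im)*u)) (Ioi (0:ℝ)) :=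
    exp_neg_integrableOn_Ioi 0 (by positivity)
  have h2 : ‖∫ u in Ioi (0:ℝ), Complex.exp (-z^2) * Complex.exp (-((u:ℂ) - Complex.I*z)^2)‖
      ≤ ∫ u in Ioi (0:ℝ), Real.exp (-(2*z.im)*u) := by
    apply norm_integral_le_of_norm_le hintb
    rw [ae_restrict_iff' measurableSet_Ioi]
    filter_upwards with u hu
    exact hnorm u hu
  have h3 : (∫ u in Ioi (0:ℝ), Real.exp (-(2*z.im)*u)) = (2*z.im)⁻¹ := by
    have := integral_comp_mul_left_Ioi (fun x : ℝ => Real.exp (-x)) 0 (b := 2*z.im) (by positivity)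
    simp only [mul_zero] at this
    have e : (fun u : ℝ => Real.exp (-(2*z.im)*u)) = fun u : ℝ => Real.exp (-(2*z.im*u)) := by
      funext u; ring_nf
    rw [e, this, integral_exp_neg_Ioi]
    simp
  calc 2 / Real.sqrt Real.pi *
        ‖∫ u in Ioi (0:ℝ), Complex.exp (-z^2) * Complex.exp (-((u:ℂ) - Complex.I*z)^2)‖
      ≤ 2 / Real.sqrt Real.pi * (2*z.im)⁻¹ := by
        apply mul_le_mul_of_nonneg_left _ (by positivity)
        rw [← h3]
        exact h2
    _ = 1 / (Real.sqrt Real.pi * z.im) := by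
        field_simp

lemma integral_exp_lin (a : ℝ) (ha : 0 < a) :
    (∫ s in (0:ℝ)..1, Real.exp ((s-1)*a)) = (1 - Real.exp (-a))/a := by
  have hd : ∀ s ∈ uIcc (0:ℝ) 1, HasDerivAt (fun s : ℝ => Real.exp ((s-1)*a)/a)
      (Real.exp ((s-1)*a)) s := by
    intro s _
    have h := (((hasDerivAt_id s).sub_const 1).mul_const a).exp.div_const a
    refine h.congr_deriv ?_
    simp [ha.ne']
  have hint : IntervalIntegrable (fun s : ℝ => Real.exp ((s-1)*a)) volume 0 1 := by
    apply Continuous.intervalIntegrable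
    fun_prop
  rw [intervalIntegral.integral_eq_sub_of_hasDerivAt hd hint]
  norm_num
  ring

lemma direct_bound (z : ℂ) (ha : 0 < (z^2).re) :
    ‖Complex.exp (-z ^ 2) +
        (2 * Complex.I * z / (Real.sqrt Real.pi : ℂ)) * Complex.exp (-z ^ 2) *
          ∫ s in (0:ℝ)..1, Complex.exp ((s : ℂ) ^ 2 * z ^ 2)‖
      ≤ Real.exp (-(z^2).re) + (2 * ‖z‖ / Real.sqrt Real.pi) * (1 / (z^2).re) := by
  have hπ : 0 < Real.sqrt Real.pi := Real.sqrt_pos.mpr Real.pi_pos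
  set a := (z^2).re with hadef
  have habs1 : ‖Complex.exp (-z^2)‖ = Real.exp (-a) := by
    rw [Complex.norm_exp, Complex.neg_re]
  have habs2 : ‖2 * Complex.I * z / (Real.sqrt Real.pi : ℂ)‖
      = 2 * ‖z‖ / Real.sqrt Real.pi := by
    rw [norm_div, norm_mul, norm_mul, Complex.norm_real, Real.norm_eq_abs, _root_.abs_of_nonneg hπ.le]
    simp
  have hpull : Complex.exp (-z^2) * ∫ s in (0:ℝ)..1, Complex.exp ((s:ℂ)^2*z^2)
      = ∫ s in (0:ℝ)..1, Complex.exp (-z^2) * Complex.exp ((s:ℂ)^2*z^2) :=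
    (intervalIntegral.integral_const_mul _ _).symm
  have hintlin : IntervalIntegrable (fun s : ℝ => Real.exp ((s-1)*a)) volume 0 1 := by
    apply Continuous.intervalIntegrable; fun_prop
  have hae : ∀ᵐ (s : ℝ) ∂(volume.restrict (Set.uIoc (0:ℝ) 1)),
      ‖Complex.exp (-z^2) * Complex.exp ((s:ℂ)^2*z^2)‖ ≤ Real.exp ((s-1)*a) := by
    rw [ae_restrict_iff' measurableSet_uIoc]
    filter_upwards with s hs
    have hs' : s ∈ Ioc (0:ℝ) 1 := by rwa [uIoc_of_le (by norm_num : (0:ℝ) ≤ 1)] at hs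
    rw [norm_mul, Complex.norm_exp, Complex.neg_re, norm_cexp_sq,
      ← Real.exp_add]
    apply Real.exp_le_exp.mpr
    have h1 : s^2 - 1 ≤ s - 1 := by nlinarith [hs'.1.le, hs'.2]
    nlinarith
  have h3 : ‖∫ s in (0:ℝ)..1, Complex.exp (-z^2) * Complex.exp ((s:ℂ)^2*z^2)‖
      ≤ (1 - Real.exp (-a))/a := by
    have h4 := intervalIntegral.norm_integral_le_of_norm_le (by norm_num)
      (by rw [← ae_restrict_iff' measurableSet_Ioc, ← uIoc_of_le (by norm_num : (0:ℝ) ≤ 1)]; exact hae) hintlin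
    have hnn : (0:ℝ) ≤ (1 - Real.exp (-a))/a := by
      apply div_nonneg _ ha.le
      have : Real.exp (-a) ≤ 1 := Real.exp_le_one_iff.mpr (by linarith)
      linarith
    rwa [integral_exp_lin a ha] at h4
  calc ‖Complex.exp (-z ^ 2) +
        (2 * Complex.I * z / (Real.sqrt Real.pi : ℂ)) * Complex.exp (-z ^ 2) *
          ∫ s in (0:ℝ)..1, Complex.exp ((s : ℂ) ^ 2 * z ^ 2)‖
      ≤ ‖Complex.exp (-z^2)‖ +
        ‖(2 * Complex.I * z / (Real.sqrt Real.pi : ℂ)) * Complex.exp (-z^2) *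
          ∫ s in (0:ℝ)..1, Complex.exp ((s:ℂ)^2*z^2)‖ := norm_add_le _ _
    _ ≤ Real.exp (-a) + (2 * ‖z‖ / Real.sqrt Real.pi) * (1/a) := by
        rw [habs1]
        apply add_le_add le_rfl
        rw [mul_assoc, norm_mul, habs2]
        apply mul_le_mul_of_nonneg_left _ (by positivity)
        rw [hpull]
        calc ‖∫ s in (0:ℝ)..1, Complex.exp (-z^2) * Complex.exp ((s:ℂ)^2*z^2)‖
            ≤ (1 - Real.exp (-a))/a := h3
          _ ≤ 1/a := by
              gcongr
              linarith [Real.exp_nonneg (-a)]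

lemma sin_lb {θ : ℝ} (h1 : Real.pi/8 ≤ θ) (h2 : θ ≤ 7*Real.pi/8) :
    Real.sin (Real.pi/8) ≤ Real.sin θ := by
  have hπ := Real.pi_pos
  rcases le_or_gt θ (Real.pi/2) with h | h
  · apply Real.strictMonoOn_sin.monotoneOn _ _ h1 <;>
      constructor <;> nlinarith
  · rw [← Real.sin_pi_sub θ]
    apply Real.strictMonoOn_sin.monotoneOn _ _ (by nlinarith) <;>
      constructor <;> nlinarith

lemma cos_lb {φ : ℝ} (h : |φ| ≤ Real.pi/4) : Real.cos (Real.pi/4) ≤ Real.cos φ := by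
  have hπ := Real.pi_pos
  rw [← Real.cos_abs φ]
  apply Real.strictAntiOn_cos.antitoneOn _ _ h <;>
    constructor <;> nlinarith [abs_nonneg φ]


/-- Decay estimate `|w(z)| ≤ C/|z|` for the Faddeeva function
`w(z) = e^{−z²} erfc(−iz) = e^{−z²} + (2iz/√π) e^{−z²} ∫₀¹ e^{s²z²} ds`
on the sector `−π/8 < arg z < 9π/8`, for `|z|` large. -/
theorem faddeeva_sector_decay
    (w : ℂ → ℂ)
    (hw : ∀ z : ℂ, w z =
      Complex.exp (-z ^ 2) +
        (2 * Complex.I * z / (Real.sqrt Real.pi : ℂ)) * Complex.exp (-z ^ 2) *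
          ∫ s in (0:ℝ)..1, Complex.exp ((s : ℂ) ^ 2 * z ^ 2)) :
    ∃ C > 0, ∃ R > 0, ∀ z : ℂ, R ≤ ‖z‖ →
      (∃ θ : ℝ, -Real.pi / 8 < θ ∧ θ < 9 * Real.pi / 8 ∧
        z = (‖z‖ : ℂ) * Complex.exp (Complex.I * (θ : ℂ))) →
      ‖w z‖ ≤ C / ‖z‖ := by

  have hπ := Real.pi_pos
  have hsq : 0 < Real.sqrt Real.pi := Real.sqrt_pos.mpr hπ
  set c1 : ℝ := Real.sin (Real.pi/8) with hc1def
  set c2 : ℝ := Real.cos (Real.pi/4) with hc2def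
  have hc1 : 0 < c1 := Real.sin_pos_of_pos_of_lt_pi (by positivity) (by nlinarith)
  have hc2 : 0 < c2 := Real.cos_pos_of_mem_Ioo (by constructor <;> nlinarith)
  refine ⟨1/(Real.sqrt Real.pi * c1) + (1/c2 + 2/(Real.sqrt Real.pi * c2)), by positivity,
    1, one_pos, ?_⟩
  intro z hR hθ
  obtain ⟨θ, hθ1, hθ2, hz⟩ := hθ
  rw [mul_comm Complex.I ((θ:ℝ):ℂ)] at hz
  set r := ‖z‖ with hrdef
  have hr1 : (1:ℝ) ≤ r := hR
  have hr0 : (0:ℝ) < r := lt_of_lt_of_le one_pos hr1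
  set C : ℝ := 1/(Real.sqrt Real.pi * c1) + (1/c2 + 2/(Real.sqrt Real.pi * c2)) with hCdef
  have hC1 : 1/(Real.sqrt Real.pi * c1) ≤ C := by
    have : 0 < 1/c2 + 2/(Real.sqrt Real.pi * c2) := by positivity
    linarith
  have hC2 : 1/c2 + 2/(Real.sqrt Real.pi * c2) ≤ C := by
    have : 0 < 1/(Real.sqrt Real.pi * c1) := by positivity
    linarith
  have him : z.im = r * Real.sin θ := by
    rw [hz]
    simp [Complex.mul_im, Complex.exp_ofReal_mul_I_im, Complex.exp_ofReal_mul_I_re]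
  have hz2 : z^2 = ((r^2 : ℝ) : ℂ) * Complex.exp (((2*θ : ℝ) : ℂ) * Complex.I) := by
    rw [hz, mul_pow, sq (Complex.exp _), ← Complex.exp_add]
    push_cast
    ring_nf
  have hre2 : (z^2).re = r^2 * Real.cos (2*θ) := by
    rw [hz2, Complex.re_ofReal_mul, Complex.exp_ofReal_mul_I_re]
  by_cases hcase : Real.pi/8 ≤ θ ∧ θ ≤ 7*Real.pi/8
  · -- sector near imaginary axis : use the Gaussian integral representation
    have hsin : c1 ≤ Real.sin θ := sin_lb hcase.1 hcase.2
    have hy : r * c1 ≤ z.im := by rw [him]; nlinarith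
    have hy0 : 0 < z.im := lt_of_lt_of_le (by positivity) hy
    have hb := upper_bound (z := z) hy0
    rw [hw z, key_identity z]
    refine le_trans hb ?_
    have step1 : 1/(Real.sqrt Real.pi * z.im) ≤ 1/(Real.sqrt Real.pi * (r * c1)) := by
      gcongr
    have step2 : 1/(Real.sqrt Real.pi * (r * c1)) = (1/(Real.sqrt Real.pi * c1))/r := by
      field_simp
    calc 1/(Real.sqrt Real.pi * z.im) ≤ 1/(Real.sqrt Real.pi * (r * c1)) := step1
      _ = (1/(Real.sqrt Real.pi * c1))/r := step2
      _ ≤ C/r := by gcongr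
  · -- sector near real axis : direct estimate
    push_neg at hcase
    have hcos : c2 ≤ Real.cos (2*θ) := by
      rcases le_or_gt (Real.pi/8) θ with h | h
      · have h7 := hcase h
        rw [show (2*θ) = (2*θ - 2*Real.pi) + 2*Real.pi by ring, Real.cos_add_two_pi]
        apply cos_lb
        rw [abs_le]
        constructor <;> nlinarith
      · apply cos_lb
        rw [abs_le]
        constructor <;> nlinarith
    have ha' : r^2 * c2 ≤ (z^2).re := by rw [hre2]; nlinarith
    have ha : 0 < (z^2).re := lt_of_lt_of_le (by positivity) ha'
    rw [hw z]
    refine le_trans (direct_bound z ha) ?_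
    have e1 : Real.exp (-(z^2).re) ≤ (1/c2)/r := by
      have h1 : c2 * r ≤ (z^2).re := by nlinarith
      have h2 : Real.exp (-(z^2).re) ≤ Real.exp (-(c2*r)) := Real.exp_le_exp.mpr (by linarith)
      have h3 : Real.exp (-(c2*r)) ≤ 1/(c2*r) := by
        rw [Real.exp_neg, one_div]
        apply inv_anti₀ (by positivity)
        linarith [Real.add_one_le_exp (c2*r)]
      have h4 : 1/(c2*r) = (1/c2)/r := by field_simp
      linarith [h2.trans (h3.trans_eq h4)]
    have e2 : (2 * r / Real.sqrt Real.pi) * (1/(z^2).re) ≤ (2/(Real.sqrt Real.pi * c2))/r := by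
      have h1 : (2 * r / Real.sqrt Real.pi) * (1/(z^2).re)
          ≤ (2 * r / Real.sqrt Real.pi) * (1/(r^2*c2)) := by
        gcongr
      have h2 : (2 * r / Real.sqrt Real.pi) * (1/(r^2*c2)) = (2/(Real.sqrt Real.pi * c2))/r := by
        field_simp
      linarith [h1.trans_eq h2]
    calc Real.exp (-(z^2).re) + (2 * r / Real.sqrt Real.pi) * (1/(z^2).re)
        ≤ (1/c2)/r + (2/(Real.sqrt Real.pi * c2))/r := add_le_add e1 e2
      _ = (1/c2 + 2/(Real.sqrt Real.pi * c2))/r := by ring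
      _ ≤ C/r := by gcongr
end

section
/- Let μ be a positive Borel measure on [0,∞) with μ([0,1]) < ∞ and ∫₁^∞ x⁻¹ μ(dx) < ∞, and let γ, λ, m, β > 0. Let Ω = {z ∈ ℂ : Re z ≤ 0, z ≠ 0}, let p(z) = ∫₀^∞ 1/(z − x) μ(dx) for z ∈ Ω, and define q₂(z) = γ − λ·z + m·z² + β·z·p(z). Then q₂ is analytic on Ω and q₂(z) ≠ 0 for every z ∈ Ω. -/
open MeasureTheory Filter Set

/-- The punctured closed left half-plane `ℂ*∖{0} = {z : Re z ≤ 0, z ≠ 0}`. -/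
def leftHalfPunctured : Set ℂ := {z : ℂ | z.re ≤ 0 ∧ z ≠ 0}

namespace Q2Aux

/-- The nonnegative real axis viewed inside `ℂ`. -/
def S : Set ℂ := {z : ℂ | 0 ≤ z.re ∧ z.im = 0}

lemma isClosed_S : IsClosed S :=
  (isClosed_le continuous_const Complex.continuous_re).inter
    (isClosed_eq Complex.continuous_im continuous_const)

lemma infDist_pos {z : ℂ} (hz : z ∉ S) : 0 < Metric.infDist z S :=
  (isClosed_S.notMem_iff_infDist_pos ⟨1, by simp [S]⟩).1 hz

lemma ofReal_mem_S {x : ℝ} (hx : 0 ≤ x) : (x : ℂ) ∈ S := by simp [S, hx]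

/-- Integrability of the standard dominating function. -/
lemma integrable_bound (μ : Measure ℝ)
    (hμ01 : μ (Icc (0:ℝ) 1) < ⊤)
    (hμint : IntegrableOn (fun x : ℝ => x⁻¹) (Ici 1) μ)
    (c c' T : ℝ) (hT : 1 ≤ T) :
    IntegrableOn (fun x : ℝ => if x ≤ T then c else c' * x⁻¹) (Ici 0) μ := by
  have hμ1T : μ (Icc (1:ℝ) T) < ⊤ := by
    have h1 : IntegrableOn (fun x : ℝ => x⁻¹) (Icc 1 T) μ :=
      hμint.mono_set Icc_subset_Ici_self
    have h2 := h1.measure_norm_ge_lt_top (ε := T⁻¹) (by positivity)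
    refine lt_of_le_of_lt ?_ h2
    rw [Measure.restrict_apply]
    · refine measure_mono fun x hx => ?_
      rcases hx with ⟨h1x, hxT⟩
      refine ⟨?_, h1x, hxT⟩
      simp only [mem_setOf_eq, Real.norm_eq_abs,
        abs_of_nonneg (inv_nonneg.2 (by linarith : (0:ℝ) ≤ x))]
      exact inv_anti₀ (by linarith) hxT
    · exact measurableSet_le measurable_const measurable_inv.norm
  have hμ0T : μ (Icc (0:ℝ) T) < ⊤ := by
    refine lt_of_le_of_lt (measure_mono (show Icc (0:ℝ) T ⊆ Icc 0 1 ∪ Icc 1 T from ?_)) ?_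
    · rintro x ⟨h0, hTx⟩
      rcases le_total x 1 with h | h
      · exact Or.inl ⟨h0, h⟩
      · exact Or.inr ⟨h, hTx⟩
    · exact lt_of_le_of_lt (measure_union_le _ _) (ENNReal.add_lt_top.2 ⟨hμ01, hμ1T⟩)
  have hsub : Ici (0:ℝ) ⊆ Icc 0 T ∪ Ioi T := by
    intro x hx
    rcases le_or_gt x T with h | h
    · exact Or.inl ⟨hx, h⟩
    · exact Or.inr h
  refine IntegrableOn.mono_set ?_ hsub
  refine IntegrableOn.union ?_ ?_
  · have he : EqOn (fun x : ℝ => if x ≤ T then c else c' * x⁻¹) (fun _ => c) (Icc 0 T) := by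
      intro x hx; simp [hx.2]
    refine (integrableOn_congr_fun he measurableSet_Icc).2 ?_
    exact integrableOn_const hμ0T.ne
  · have he : EqOn (fun x : ℝ => if x ≤ T then c else c' * x⁻¹)
        (fun x : ℝ => c' * x⁻¹) (Ioi T) := by
      intro x hx; simp [not_le.2 (mem_Ioi.1 hx)]
    refine (integrableOn_congr_fun he measurableSet_Ioi).2 ?_
    exact (hμint.mono_set fun x hx => le_of_lt (lt_of_le_of_lt hT hx)).const_mul c'

lemma lower_bound_near {z₀ : ℂ} {w : ℂ}
    (hw : w ∈ Metric.ball z₀ (Metric.infDist z₀ S / 2)) {x : ℝ} (hx : 0 ≤ x) :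
    Metric.infDist z₀ S / 2 ≤ ‖w - (x : ℂ)‖ := by
  set d := Metric.infDist z₀ S with hd
  have h1 : d ≤ Metric.infDist w S + dist z₀ w := Metric.infDist_le_infDist_add_dist
  have h2 : Metric.infDist w S ≤ dist w (x : ℂ) := Metric.infDist_le_dist_of_mem (ofReal_mem_S hx)
  have h3 : dist z₀ w < d / 2 := by rw [dist_comm]; exact Metric.mem_ball.1 hw
  rw [← dist_eq_norm]
  linarith

lemma lower_bound_far {z₀ : ℂ} {w : ℂ}
    (hw : w ∈ Metric.ball z₀ (Metric.infDist z₀ S / 2)) {x : ℝ}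
    (hx : max (2 * (z₀.re + Metric.infDist z₀ S / 2)) 1 < x) :
    x / 2 ≤ ‖w - (x : ℂ)‖ := by
  set d := Metric.infDist z₀ S with hd
  have h2 : ‖w - z₀‖ < d / 2 := by
    rw [← Complex.dist_eq]; exact Metric.mem_ball.1 hw
  have h1 : |(w - z₀).re| ≤ ‖w - z₀‖ := Complex.abs_re_le_norm _
  rw [Complex.sub_re] at h1
  have hwre : w.re < z₀.re + d / 2 := by
    have := (abs_le.1 h1).2
    linarith
  have hx2 : 2 * (z₀.re + d / 2) < x := lt_of_le_of_lt (le_max_left _ _) hx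
  have hx1 : (1:ℝ) < x := lt_of_le_of_lt (le_max_right _ _) hx
  have h3 : |(w - (x:ℂ)).re| ≤ ‖w - (x:ℂ)‖ := Complex.abs_re_le_norm _
  rw [Complex.sub_re, Complex.ofReal_re] at h3
  have h4 : x / 2 ≤ |w.re - x| := by
    rw [abs_sub_comm, abs_of_nonneg (by linarith)]
    linarith
  calc x / 2 ≤ |w.re - x| := h4
    _ ≤ ‖w - (x:ℂ)‖ := h3
    _ = ‖w - (x:ℂ)‖ := rfl

lemma key (μ : Measure ℝ)
    (hμ01 : μ (Icc (0:ℝ) 1) < ⊤)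
    (hμint : IntegrableOn (fun x : ℝ => x⁻¹) (Ici 1) μ)
    {z₀ : ℂ} (hz : z₀ ∉ S) :
    Integrable (fun x : ℝ => (z₀ - (x:ℂ))⁻¹) (μ.restrict (Ici 0)) ∧
    DifferentiableAt ℂ (fun z : ℂ => ∫ x in Ici (0:ℝ), (z - (x : ℂ))⁻¹ ∂μ) z₀ := by
  set d := Metric.infDist z₀ S with hd
  have hd0 : 0 < d := infDist_pos hz
  set T : ℝ := max (2 * (z₀.re + d / 2)) 1 with hT
  have hT1 : (1:ℝ) ≤ T := le_max_right _ _
  have hmeas : ∀ w : ℂ, AEStronglyMeasurable (fun x : ℝ => (w - (x:ℂ))⁻¹)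
      (μ.restrict (Ici 0)) := fun w =>
    ((measurable_const.sub Complex.measurable_ofReal).inv).aestronglyMeasurable
  have hball : z₀ ∈ Metric.ball z₀ (d / 2) := Metric.mem_ball_self (by linarith)
  -- bound for the function itself
  have hbnd1 : ∀ w ∈ Metric.ball z₀ (d / 2), ∀ x : ℝ, 0 ≤ x →
      ‖(w - (x:ℂ))⁻¹‖ ≤ (if x ≤ T then (d/2)⁻¹ else 2 * x⁻¹) := by
    intro w hw x hx
    rw [norm_inv]
    split_ifs with h
    · exact inv_anti₀ (by linarith) (lower_bound_near hw hx)
    · have hxT : T < x := not_le.1 h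
      have hx1 : (1:ℝ) < x := lt_of_le_of_lt hT1 hxT
      have := lower_bound_far hw hxT
      calc ‖w - (x:ℂ)‖⁻¹ ≤ (x/2)⁻¹ := inv_anti₀ (by linarith) this
        _ = 2 * x⁻¹ := by rw [div_eq_mul_inv, mul_inv, inv_inv]; ring
  -- bound for the derivative
  have hbnd2 : ∀ w ∈ Metric.ball z₀ (d / 2), ∀ x : ℝ, 0 ≤ x →
      ‖-1 / (w - (x:ℂ))^2‖ ≤ (if x ≤ T then ((d/2)*(d/2))⁻¹ else (2 * (d/2)⁻¹) * x⁻¹) := by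
    intro w hw x hx
    have hnear := lower_bound_near hw hx
    have hpos : (0:ℝ) < ‖w - (x:ℂ)‖ := lt_of_lt_of_le (by linarith) hnear
    have hnorm : ‖-1 / (w - (x:ℂ))^2‖ = (‖w - (x:ℂ)‖ * ‖w - (x:ℂ)‖)⁻¹ := by
      rw [norm_div, norm_neg, norm_one, sq, norm_mul, one_div]
    rw [hnorm]
    split_ifs with h
    · exact inv_anti₀ (by positivity) (mul_le_mul hnear hnear (by linarith) hpos.le)
    · have hxT : T < x := not_le.1 h
      have hx1 : (1:ℝ) < x := lt_of_le_of_lt hT1 hxT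
      have hfar := lower_bound_far hw hxT
      have : (d/2) * (x/2) ≤ ‖w - (x:ℂ)‖ * ‖w - (x:ℂ)‖ :=
        mul_le_mul hnear hfar (by linarith) hpos.le
      calc (‖w - (x:ℂ)‖ * ‖w - (x:ℂ)‖)⁻¹ ≤ ((d/2) * (x/2))⁻¹ :=
            inv_anti₀ (by positivity) this
        _ = (2 * (d/2)⁻¹) * x⁻¹ := by
            rw [mul_inv]
            field_simp
  have hb2int : Integrable (fun x : ℝ =>
      if x ≤ T then ((d/2)*(d/2))⁻¹ else (2 * (d/2)⁻¹) * x⁻¹) (μ.restrict (Ici 0)) :=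
    integrable_bound μ hμ01 hμint _ _ _ hT1
  have hb1int : Integrable (fun x : ℝ =>
      if x ≤ T then (d/2)⁻¹ else 2 * x⁻¹) (μ.restrict (Ici 0)) :=
    integrable_bound μ hμ01 hμint _ _ _ hT1
  have hF_int : Integrable (fun x : ℝ => (z₀ - (x:ℂ))⁻¹) (μ.restrict (Ici 0)) := by
    refine hb1int.mono' (hmeas z₀) ?_
    rw [ae_restrict_iff' measurableSet_Ici]
    exact ae_of_all _ fun x hx => hbnd1 z₀ hball x hx
  refine ⟨hF_int, ?_⟩
  have hder := hasDerivAt_integral_of_dominated_loc_of_deriv_le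
      (μ := μ.restrict (Ici 0))
      (F := fun (z : ℂ) (x : ℝ) => (z - (x:ℂ))⁻¹)
      (F' := fun (z : ℂ) (x : ℝ) => -1 / (z - (x:ℂ))^2)
      (x₀ := z₀)
      (bound := fun x : ℝ => if x ≤ T then ((d/2)*(d/2))⁻¹ else (2 * (d/2)⁻¹) * x⁻¹)
      (Metric.ball_mem_nhds z₀ (show (0:ℝ) < d / 2 by linarith))
      (Eventually.of_forall fun w => hmeas w)
      hF_int
      (((measurable_const.div
        (((measurable_const.sub Complex.measurable_ofReal)).pow_const 2))).aestronglyMeasurable)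
      ?_ hb2int ?_
  · exact hder.2.differentiableAt
  · rw [ae_restrict_iff' measurableSet_Ici]
    exact ae_of_all _ fun x hx w hw => hbnd2 w hw x hx
  · rw [ae_restrict_iff' measurableSet_Ici]
    refine ae_of_all _ fun x hx w hw => ?_
    have hne : w - (x:ℂ) ≠ 0 := by
      have := lower_bound_near hw hx
      intro h
      rw [h, norm_zero] at this
      linarith
    have h1 : HasDerivAt (fun y : ℂ => y - (x:ℂ)) 1 w := (hasDerivAt_id w).sub_const _
    exact h1.inv hne

end Q2Aux

open Q2Aux

/-- The function `q₂(z) = γ − λz + mz² + βz·p(z)`, with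
`p(z) = ∫₀^∞ (z−x)⁻¹ μ(dx)`, is analytic and non-vanishing on the punctured
closed left half-plane. -/
theorem q2_analytic_nonvanishing_CM
    (μ : Measure ℝ) (γ lam m β : ℝ)
    (hγ : 0 < γ) (hlam : 0 < lam) (hm : 0 < m) (hβ : 0 < β)
    (hμ01 : μ (Icc (0:ℝ) 1) < ⊤)
    (hμint : IntegrableOn (fun x : ℝ => x⁻¹) (Ici 1) μ)
    (p q₂ : ℂ → ℂ)
    (hp : ∀ z : ℂ, p z = ∫ x in Ici (0:ℝ), (z - (x : ℂ))⁻¹ ∂μ)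
    (hq₂ : ∀ z : ℂ, q₂ z =
      (γ : ℂ) - (lam : ℂ) * z + (m : ℂ) * z ^ 2 + (β : ℂ) * z * p z) :
    (∀ z ∈ leftHalfPunctured, AnalyticAt ℂ q₂ z) ∧
    (∀ z ∈ leftHalfPunctured, q₂ z ≠ 0) := by
  have hmemS : ∀ z ∈ leftHalfPunctured, z ∉ S := by
    rintro z ⟨hre, hz0⟩ ⟨hre', him⟩
    exact hz0 (Complex.ext (le_antisymm hre hre') him)
  constructor
  · -- analyticity
    intro z hz
    have hzS := hmemS z hz
    have hPdiff : DifferentiableOn ℂ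
        (fun z : ℂ => ∫ x in Ici (0:ℝ), (z - (x : ℂ))⁻¹ ∂μ) Sᶜ :=
      fun w hw => ((key μ hμ01 hμint hw).2).differentiableWithinAt
    have hPan : AnalyticAt ℂ (fun z : ℂ => ∫ x in Ici (0:ℝ), (z - (x : ℂ))⁻¹ ∂μ) z :=
      hPdiff.analyticAt (isClosed_S.isOpen_compl.mem_nhds hzS)
    have hpan : AnalyticAt ℂ p z := by
      have : p = fun z : ℂ => ∫ x in Ici (0:ℝ), (z - (x : ℂ))⁻¹ ∂μ := funext hp
      rw [this]; exact hPan
    have hq : q₂ = fun z : ℂ =>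
        (γ : ℂ) - (lam : ℂ) * z + (m : ℂ) * z ^ 2 + (β : ℂ) * z * p z := funext hq₂
    rw [hq]
    exact (((analyticAt_const.sub (analyticAt_const.mul analyticAt_id)).add
      (analyticAt_const.mul (analyticAt_id.pow 2))).add
      ((analyticAt_const.mul analyticAt_id).mul hpan))
  · -- nonvanishing
    rintro z hz
    obtain ⟨hre, hz0⟩ := hz
    have hzS := hmemS z ⟨hre, hz0⟩
    have hint : Integrable (fun x : ℝ => (z - (x:ℂ))⁻¹) (μ.restrict (Ici 0)) :=
      (key μ hμ01 hμint hzS).1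
    have hint2 : Integrable (fun x : ℝ => z * (z - (x:ℂ))⁻¹) (μ.restrict (Ici 0)) :=
      hint.const_mul z
    set a := z.re with ha
    set b := z.im with hb
    have hzp : z * p z = ∫ x in Ici (0:ℝ), z * (z - (x:ℂ))⁻¹ ∂μ := by
      rw [hp z, integral_const_mul]
    -- imaginary and real parts of the integrand
    have him_pt : ∀ x : ℝ, (z * (z - (x:ℂ))⁻¹).im
        = -(x * b) / Complex.normSq (z - (x:ℂ)) := by
      intro x
      simp only [Complex.mul_im, Complex.inv_re, Complex.inv_im, Complex.sub_re,
        Complex.sub_im, Complex.ofReal_re, Complex.ofReal_im, ← ha, ← hb]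
      ring
    have hre_pt : ∀ x : ℝ, (z * (z - (x:ℂ))⁻¹).re
        = (a * (a - x) + b * b) / Complex.normSq (z - (x:ℂ)) := by
      intro x
      simp only [Complex.mul_re, Complex.inv_re, Complex.inv_im, Complex.sub_re,
        Complex.sub_im, Complex.ofReal_re, Complex.ofReal_im, ← ha, ← hb]
      ring
    have hzpim : (z * p z).im = ∫ x in Ici (0:ℝ), (z * (z - (x:ℂ))⁻¹).im ∂μ := by
      rw [hzp]
      have := integral_im (𝕜 := ℂ) hint2
      simpa using this.symm
    have hzpre : (z * p z).re = ∫ x in Ici (0:ℝ), (z * (z - (x:ℂ))⁻¹).re ∂μ := by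
      rw [hzp]
      have := integral_re (𝕜 := ℂ) hint2
      simpa using this.symm
    have hq2im : (q₂ z).im = -(lam * b) + m * (2 * a * b) + β * (z * p z).im := by
      rw [hq₂ z]
      simp only [Complex.add_im, Complex.sub_im, Complex.mul_im, Complex.ofReal_re,
        Complex.ofReal_im, Complex.mul_re, sq, ← ha, ← hb]
      ring
    have hq2re : (q₂ z).re = γ - lam * a + m * (a * a - b * b) + β * (z * p z).re
        - 0 * (z * p z).im := by
      rw [hq₂ z]
      simp only [Complex.add_re, Complex.sub_re, Complex.mul_re, Complex.ofReal_re,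
        Complex.ofReal_im, Complex.mul_im, sq, ← ha, ← hb]
      ring
    by_cases hbz : b = 0
    · -- z is a negative real; real part of q₂ is positive
      have hb0 : b = 0 := hbz
      have ha0 : a < 0 := by
        rcases lt_or_eq_of_le hre with h | h
        · exact h
        · exact absurd (by simp [Complex.ext_iff, ← ha, ← hb, h.symm, hb0]) hz0
      have hrepos : 0 ≤ (z * p z).re := by
        rw [hzpre]
        refine setIntegral_nonneg measurableSet_Ici fun x hx => ?_
        rw [hre_pt x]
        have hx0 : (0:ℝ) ≤ x := hx
        apply div_nonneg _ (Complex.normSq_nonneg _)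
        nlinarith
      have : 0 < (q₂ z).re := by
        rw [hq2re, hb0]
        nlinarith
      intro h
      rw [h, Complex.zero_re] at this
      exact lt_irrefl _ this
    · -- Im z ≠ 0 : imaginary part of q₂ is nonzero
      have hbim : b * (z * p z).im ≤ 0 := by
        rw [hzpim, ← integral_const_mul]
        refine setIntegral_nonpos measurableSet_Ici fun x hx => ?_
        rw [him_pt x]
        have hx0 : (0:ℝ) ≤ x := hx
        rw [← mul_div_assoc]
        apply div_nonpos_of_nonpos_of_nonneg _ (Complex.normSq_nonneg _)
        nlinarith
      have hlt : b * (q₂ z).im < 0 := by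
        have hbb : 0 < b * b := mul_self_pos.2 hbz
        have h2 : 2 * m * a * (b * b) ≤ 0 := by
          nlinarith [mul_nonneg (mul_nonneg (by linarith : (0:ℝ) ≤ 2 * m)
            (neg_nonneg.2 hre)) hbb.le]
        have h3 : β * (b * (z * p z).im) ≤ 0 :=
          mul_nonpos_of_nonneg_of_nonpos hβ.le hbim
        rw [hq2im]
        nlinarith
      intro h
      rw [h, Complex.zero_im, mul_zero] at hlt
      exact lt_irrefl _ hlt
end
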